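/- arXiv:1306.3448 — 4 statements merged into one kernel-verified Lean document; each statement's English description precedes it below -/
import Mathlib

section
/- Let W and Y be strictly positive random variables such that Y is stochastically dominated by W₀Y₀ + W₁Y₁, where (W₀,W₁) and (Y₀,Y₁) are pairs of copies of W and Y respectively, all four variables independent. Then the Laplace transform φ(t) = E[e^{-tY}] satisfies φ(t) ≥ P(W ≤ t^{-1/2})² · φ(t^{1/2})² for all t ≥ 1. -/
open MeasureTheory ProbabilityTheory Real
open scoped ProbabilityTheory ENNReal

theorem laplace_lower_recursive_bound
    {Ω : Type*} [MeasureSpace Ω] [IsProbabilityMeasure (ℙ : Measure Ω)]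
    (W Y W₀ W₁ Y₀ Y₁ : Ω → ℝ)
    (hWmeas : Measurable W) (hYmeas : Measurable Y)
    (hW₀meas : Measurable W₀) (hW₁meas : Measurable W₁)
    (hY₀meas : Measurable Y₀) (hY₁meas : Measurable Y₁)
    (hWpos : ∀ ω, 0 < W ω) (hYpos : ∀ ω, 0 < Y ω)
    (hindep : iIndepFun ![W₀, W₁, Y₀, Y₁] ℙ)
    (hW₀d : IdentDistrib W₀ W ℙ ℙ) (hW₁d : IdentDistrib W₁ W ℙ ℙ)
    (hY₀d : IdentDistrib Y₀ Y ℙ ℙ) (hY₁d : IdentDistrib Y₁ Y ℙ ℙ)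
    (hdom : ∀ y : ℝ, ℙ {ω | y ≤ Y ω} ≤ ℙ {ω | y ≤ W₀ ω * Y₀ ω + W₁ ω * Y₁ ω}) :
    ∀ t : ℝ, 1 ≤ t →
      (ℙ {ω | W ω ≤ t ^ (-(1 / 2) : ℝ)}).toReal ^ 2
          * (∫ ω, Real.exp (-(t ^ ((1 : ℝ) / 2)) * Y ω)) ^ 2
        ≤ ∫ ω, Real.exp (-t * Y ω) := by
  intro t ht
  have ht0 : (0 : ℝ) < t := lt_of_lt_of_le one_pos ht
  set r : ℝ := t ^ (-(1 / 2) : ℝ) with hr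
  set u : ℝ := t ^ ((1 : ℝ) / 2) with hu
  have hu0 : 0 < u := Real.rpow_pos_of_pos ht0 _
  have htr : t * r = u := by
    rw [hr, hu]
    nth_rewrite 1 [← Real.rpow_one t]
    rw [← Real.rpow_add ht0]
    norm_num
  set S : Ω → ℝ := fun ω => W₀ ω * Y₀ ω + W₁ ω * Y₁ ω with hSdef
  have hSmeas : Measurable S := (hW₀meas.mul hY₀meas).add (hW₁meas.mul hY₁meas)
  -- a.e. positivity of copies of Y
  have haepos : ∀ (Z : Ω → ℝ), IdentDistrib Z Y ℙ ℙ → ∀ᵐ ω ∂(ℙ : Measure Ω), 0 < Z ω := by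
    intro Z h
    have hempty : Y ⁻¹' Set.Iic 0 = ∅ := by
      ext ω; simp [not_le.mpr (hYpos ω)]
    have h0 : (ℙ : Measure Ω) (Z ⁻¹' Set.Iic 0) = 0 := by
      rw [h.measure_mem_eq measurableSet_Iic, hempty, measure_empty]
    rw [ae_iff]
    convert h0 using 2
    ext ω
    simp [not_lt]
  -- stochastic domination for strict tails
  have hdom' : ∀ c : ℝ, (ℙ : Measure Ω) {ω | c < Y ω} ≤ ℙ {ω | c < S ω} := by
    intro c
    have hunion : {ω | c < Y ω} = ⋃ n : ℕ, {ω | c + ((n : ℝ) + 1)⁻¹ ≤ Y ω} := by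
      ext ω
      simp only [Set.mem_setOf_eq, Set.mem_iUnion]
      constructor
      · intro h
        obtain ⟨n, hn⟩ := exists_nat_one_div_lt (sub_pos.mpr h)
        rw [one_div] at hn
        exact ⟨n, by linarith⟩
      · rintro ⟨n, hn⟩
        have : (0 : ℝ) < ((n : ℝ) + 1)⁻¹ := by positivity
        linarith
    have hmono : Monotone fun n : ℕ => {ω | c + ((n : ℝ) + 1)⁻¹ ≤ Y ω} := by
      intro n m hnm ω hω
      simp only [Set.mem_setOf_eq] at *
      have hcast : ((n : ℝ) + 1) ≤ (m : ℝ) + 1 := by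
        have : ((n:ℕ):ℝ) ≤ (m:ℕ) := Nat.cast_le.mpr hnm
        linarith
      have : ((m : ℝ) + 1)⁻¹ ≤ ((n : ℝ) + 1)⁻¹ := by
        apply inv_anti₀ (by positivity) hcast
      linarith
    rw [hunion, hmono.measure_iUnion]
    apply iSup_le
    intro n
    refine le_trans (hdom _) (measure_mono ?_)
    intro ω hω
    simp only [Set.mem_setOf_eq, hSdef] at *
    have : (0 : ℝ) < ((n : ℝ) + 1)⁻¹ := by positivity
    linarith
  -- domination for lower tails
  have hle : ∀ c : ℝ, (ℙ : Measure Ω) {ω | S ω ≤ c} ≤ ℙ {ω | Y ω ≤ c} := by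
    intro c
    have h1 : {ω | S ω ≤ c} = {ω | c < S ω}ᶜ := by ext ω; simp [not_lt]
    have h2 : {ω | Y ω ≤ c} = {ω | c < Y ω}ᶜ := by ext ω; simp [not_lt]
    rw [h1, h2, prob_compl_eq_one_sub (measurableSet_lt measurable_const hSmeas),
      prob_compl_eq_one_sub (measurableSet_lt measurable_const hYmeas)]
    exact tsub_le_tsub_left (hdom' c) 1
  -- Step 1: E[e^{-tS}] ≤ E[e^{-tY}]  (lintegral version)
  have step1 : ∫⁻ ω, ENNReal.ofReal (Real.exp (-t * S ω)) ∂(ℙ : Measure Ω)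
      ≤ ∫⁻ ω, ENNReal.ofReal (Real.exp (-t * Y ω)) ∂(ℙ : Measure Ω) := by
    rw [lintegral_eq_lintegral_meas_le (ℙ : Measure Ω)
        (ae_of_all _ fun ω => (Real.exp_pos _).le) ((hSmeas.const_mul (-t)).exp.aemeasurable),
      lintegral_eq_lintegral_meas_le (ℙ : Measure Ω)
        (ae_of_all _ fun ω => (Real.exp_pos _).le) ((hYmeas.const_mul (-t)).exp.aemeasurable)]
    apply setLIntegral_mono
    · exact Antitone.measurable fun a b hab =>
        measure_mono fun ω h => le_trans hab h
    · intro s hs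
      have hs0 : (0 : ℝ) < s := hs
      have hset : ∀ X : Ω → ℝ, {a | s ≤ Real.exp (-t * X a)} = {a | X a ≤ -Real.log s / t} := by
        intro X
        ext a
        simp only [Set.mem_setOf_eq]
        rw [← Real.log_le_iff_le_exp hs0, le_div_iff₀ ht0]
        constructor <;> intro h <;> nlinarith
      rw [hset S, hset Y]
      exact hle _
  -- Step 2: the truncated product is below e^{-tS}
  set φW : ℝ → ℝ≥0∞ := Set.indicator (Set.Iic r) (fun _ => (1 : ℝ≥0∞)) with hφW
  set φY : ℝ → ℝ≥0∞ := fun x => ENNReal.ofReal (Real.exp (-u * x)) with hφY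
  have hφWm : Measurable φW := measurable_one.indicator measurableSet_Iic
  have hφYm : Measurable φY := ((measurable_id.const_mul (-u)).exp).ennreal_ofReal
  have step2 : ∫⁻ ω, (φW (W₀ ω) * φY (Y₀ ω)) * (φW (W₁ ω) * φY (Y₁ ω)) ∂(ℙ : Measure Ω)
      ≤ ∫⁻ ω, ENNReal.ofReal (Real.exp (-t * S ω)) ∂(ℙ : Measure Ω) := by
    apply lintegral_mono_ae
    filter_upwards [haepos Y₀ hY₀d, haepos Y₁ hY₁d] with ω h0 h1
    by_cases hw0 : W₀ ω ∈ Set.Iic r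
    · by_cases hw1 : W₁ ω ∈ Set.Iic r
      · rw [hφW, Set.indicator_of_mem hw0, Set.indicator_of_mem hw1, hφY]
        simp only [one_mul]
        rw [← ENNReal.ofReal_mul (Real.exp_pos _).le, ← Real.exp_add]
        apply ENNReal.ofReal_le_ofReal
        apply Real.exp_le_exp.mpr
        have e0 : t * (W₀ ω * Y₀ ω) ≤ u * Y₀ ω := by
          have h' : W₀ ω * Y₀ ω ≤ r * Y₀ ω :=
            mul_le_mul_of_nonneg_right hw0 h0.le
          calc t * (W₀ ω * Y₀ ω) ≤ t * (r * Y₀ ω) :=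
                mul_le_mul_of_nonneg_left h' ht0.le
            _ = u * Y₀ ω := by rw [← mul_assoc, htr]
        have e1 : t * (W₁ ω * Y₁ ω) ≤ u * Y₁ ω := by
          have h' : W₁ ω * Y₁ ω ≤ r * Y₁ ω :=
            mul_le_mul_of_nonneg_right hw1 h1.le
          calc t * (W₁ ω * Y₁ ω) ≤ t * (r * Y₁ ω) :=
                mul_le_mul_of_nonneg_left h' ht0.le
            _ = u * Y₁ ω := by rw [← mul_assoc, htr]
        have hexp : -t * S ω = -(t * (W₀ ω * Y₀ ω)) + -(t * (W₁ ω * Y₁ ω)) := by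
          simp only [hSdef]; ring
        rw [hexp]
        linarith
      · rw [hφW, Set.indicator_of_notMem hw1]
        simp
    · rw [hφW, Set.indicator_of_notMem hw0]
      simp
  -- measurability of the components of the family
  have hfam : ∀ i, Measurable (![W₀, W₁, Y₀, Y₁] i) := by
    intro i
    fin_cases i <;> simpa using ‹_›
  -- Step 3a: split into the two independent pairs
  have hpair : IndepFun (fun ω => (W₀ ω, Y₀ ω)) (fun ω => (W₁ ω, Y₁ ω)) ℙ := by
    have := hindep.indepFun_prodMk_prodMk hfam 0 2 1 3
      (by decide) (by decide) (by decide) (by decide)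
    simpa using this
  have h12 : IndepFun (fun ω => φW (W₀ ω) * φY (Y₀ ω))
      (fun ω => φW (W₁ ω) * φY (Y₁ ω)) ℙ := by
    have hm : Measurable fun p : ℝ × ℝ => φW p.1 * φY p.2 :=
      (hφWm.comp measurable_fst).mul (hφYm.comp measurable_snd)
    exact hpair.comp hm hm
  have hWY₀ : IndepFun (fun ω => φW (W₀ ω)) (fun ω => φY (Y₀ ω)) ℙ := by
    have := hindep.indepFun (i := 0) (j := 2) (by decide)
    have h' : IndepFun W₀ Y₀ ℙ := by simpa using this
    exact h'.comp hφWm hφYm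
  have hWY₁ : IndepFun (fun ω => φW (W₁ ω)) (fun ω => φY (Y₁ ω)) ℙ := by
    have := hindep.indepFun (i := 1) (j := 3) (by decide)
    have h' : IndepFun W₁ Y₁ ℙ := by simpa using this
    exact h'.comp hφWm hφYm
  -- compute the individual lintegrals
  have hindW : ∀ (Z : Ω → ℝ), Measurable Z → IdentDistrib Z W ℙ ℙ →
      ∫⁻ ω, φW (Z ω) ∂(ℙ : Measure Ω) = ℙ {ω | W ω ≤ r} := by
    intro Z hZm hZd
    have heq : (fun ω => φW (Z ω)) = Set.indicator (Z ⁻¹' Set.Iic r) (fun _ => (1 : ℝ≥0∞)) := by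
      ext ω
      by_cases h : Z ω ≤ r <;> simp [hφW, Set.indicator_apply, h]
    rw [heq, lintegral_indicator (hZm measurableSet_Iic), setLIntegral_one,
      hZd.measure_mem_eq measurableSet_Iic]
    rfl
  have hindY : ∀ (Z : Ω → ℝ), IdentDistrib Z Y ℙ ℙ →
      ∫⁻ ω, φY (Z ω) ∂(ℙ : Measure Ω) = ∫⁻ ω, φY (Y ω) ∂(ℙ : Measure Ω) := by
    intro Z hZd
    exact (hZd.comp hφYm).lintegral_eq
  -- put the factorization together
  have step3 : ∫⁻ ω, (φW (W₀ ω) * φY (Y₀ ω)) * (φW (W₁ ω) * φY (Y₁ ω)) ∂(ℙ : Measure Ω)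
      = (ℙ {ω | W ω ≤ r} * ∫⁻ ω, φY (Y ω) ∂(ℙ : Measure Ω))
        * (ℙ {ω | W ω ≤ r} * ∫⁻ ω, φY (Y ω) ∂(ℙ : Measure Ω)) := by
    rw [lintegral_mul_eq_lintegral_mul_lintegral_of_indepFun''
        (f := fun ω => φW (W₀ ω) * φY (Y₀ ω)) (g := fun ω => φW (W₁ ω) * φY (Y₁ ω))
        (by exact ((hφWm.comp hW₀meas).mul (hφYm.comp hY₀meas)).aemeasurable)
        (by exact ((hφWm.comp hW₁meas).mul (hφYm.comp hY₁meas)).aemeasurable) h12,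
      lintegral_mul_eq_lintegral_mul_lintegral_of_indepFun''
        (f := fun ω => φW (W₀ ω)) (g := fun ω => φY (Y₀ ω))
        (by exact (hφWm.comp hW₀meas).aemeasurable)
        (by exact (hφYm.comp hY₀meas).aemeasurable) hWY₀,
      lintegral_mul_eq_lintegral_mul_lintegral_of_indepFun''
        (f := fun ω => φW (W₁ ω)) (g := fun ω => φY (Y₁ ω))
        (by exact (hφWm.comp hW₁meas).aemeasurable)
        (by exact (hφYm.comp hY₁meas).aemeasurable) hWY₁,
      hindW W₀ hW₀meas hW₀d, hindW W₁ hW₁meas hW₁d, hindY Y₀ hY₀d, hindY Y₁ hY₁d]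
  -- integrability of the exponentials
  have hint : ∀ v : ℝ, 0 < v → Integrable (fun ω => Real.exp (-v * Y ω)) ℙ := by
    intro v hv
    apply Integrable.mono' (integrable_const (1 : ℝ))
      ((hYmeas.const_mul (-v)).exp.aestronglyMeasurable)
    apply ae_of_all
    intro ω
    rw [Real.norm_eq_abs, abs_of_pos (Real.exp_pos _)]
    apply Real.exp_le_one_iff.mpr
    nlinarith [hYpos ω]
  -- convert lintegrals to Bochner integrals
  have hBeq : ∫⁻ ω, φY (Y ω) ∂(ℙ : Measure Ω)
      = ENNReal.ofReal (∫ ω, Real.exp (-u * Y ω)) := by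
    rw [hφY]
    exact (ofReal_integral_eq_lintegral_ofReal (hint u hu0)
      (ae_of_all _ fun ω => (Real.exp_pos _).le)).symm
  have hCeq : ∫⁻ ω, ENNReal.ofReal (Real.exp (-t * Y ω)) ∂(ℙ : Measure Ω)
      = ENNReal.ofReal (∫ ω, Real.exp (-t * Y ω)) :=
    (ofReal_integral_eq_lintegral_ofReal (hint t ht0)
      (ae_of_all _ fun ω => (Real.exp_pos _).le)).symm
  have hAeq : (ℙ : Measure Ω) {ω | W ω ≤ r}
      = ENNReal.ofReal ((ℙ {ω | W ω ≤ r}).toReal) :=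
    (ENNReal.ofReal_toReal (measure_ne_top _ _)).symm
  set p : ℝ := (ℙ {ω | W ω ≤ r}).toReal with hp
  set I : ℝ := ∫ ω, Real.exp (-u * Y ω) with hI
  set J : ℝ := ∫ ω, Real.exp (-t * Y ω) with hJ
  have hp0 : 0 ≤ p := ENNReal.toReal_nonneg
  have hI0 : 0 ≤ I := integral_nonneg fun ω => (Real.exp_pos _).le
  have hJ0 : 0 ≤ J := integral_nonneg fun ω => (Real.exp_pos _).le
  have final : ENNReal.ofReal (p ^ 2 * I ^ 2) ≤ ENNReal.ofReal J := by
    calc ENNReal.ofReal (p ^ 2 * I ^ 2)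
        = (ENNReal.ofReal p * ENNReal.ofReal I) * (ENNReal.ofReal p * ENNReal.ofReal I) := by
          rw [← ENNReal.ofReal_mul hp0, ← ENNReal.ofReal_mul (mul_nonneg hp0 hI0)]
          ring_nf
      _ = (ℙ {ω | W ω ≤ r} * ∫⁻ ω, φY (Y ω) ∂(ℙ : Measure Ω))
            * (ℙ {ω | W ω ≤ r} * ∫⁻ ω, φY (Y ω) ∂(ℙ : Measure Ω)) := by
          rw [hBeq, hAeq]
      _ = ∫⁻ ω, (φW (W₀ ω) * φY (Y₀ ω)) * (φW (W₁ ω) * φY (Y₁ ω)) ∂(ℙ : Measure Ω) :=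
          step3.symm
      _ ≤ ∫⁻ ω, ENNReal.ofReal (Real.exp (-t * S ω)) ∂(ℙ : Measure Ω) := step2
      _ ≤ ∫⁻ ω, ENNReal.ofReal (Real.exp (-t * Y ω)) ∂(ℙ : Measure Ω) := step1
      _ = ENNReal.ofReal J := hCeq
  exact (ENNReal.ofReal_le_ofReal_iff hJ0).mp final
end

section
/- Suppose W is a positive random variable such that for some γ > 1, c > 0 and x' ∈ (0,1), P(W ≤ x) ≥ exp(-c(log(1/x))^γ) for all 0 < x ≤ x', and Y is a positive random variable stochastically dominated by W₀Y₀ + W₁Y₁ (all four variables independent copies of W and Y). Then there exist constants t_γ, c_γ > 0 such that E[e^{-tY}] ≥ exp(-c_γ (log t)^γ) for all t ≥ t_γ. -/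
open MeasureTheory ProbabilityTheory Real
open scoped ProbabilityTheory

private lemma exp_neg_integrable' {Ω : Type*} [MeasureSpace Ω]
    [IsProbabilityMeasure (ℙ : Measure Ω)] {Z : Ω → ℝ} (hZ : Measurable Z)
    (hZ0 : ∀ᵐ ω ∂(ℙ : Measure Ω), 0 ≤ Z ω) :
    Integrable (fun ω => Real.exp (-Z ω)) (ℙ : Measure Ω) := by
  refine (integrable_const (1:ℝ)).mono' hZ.neg.exp.aestronglyMeasurable ?_
  filter_upwards [hZ0] with ω hω
  rw [Real.norm_eq_abs, abs_of_pos (Real.exp_pos _)]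
  exact Real.exp_le_one_iff.mpr (by linarith)

private lemma exp_neg_integral_pos' {Ω : Type*} [MeasureSpace Ω]
    [IsProbabilityMeasure (ℙ : Measure Ω)] {Z : Ω → ℝ} (hZ : Measurable Z)
    (hZ0 : ∀ᵐ ω ∂(ℙ : Measure Ω), 0 ≤ Z ω) :
    0 < ∫ ω, Real.exp (-Z ω) := by
  rw [integral_pos_iff_support_of_nonneg (fun ω => (Real.exp_pos _).le)
    (exp_neg_integrable' hZ hZ0)]
  have : (Function.support fun ω => Real.exp (-Z ω)) = Set.univ := by
    ext ω; simp [Function.support, Real.exp_ne_zero]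
  rw [this]
  simp

set_option maxHeartbeats 1600000 in
theorem laplace_lower_bound_from_tail
    {Ω : Type*} [MeasureSpace Ω] [IsProbabilityMeasure (ℙ : Measure Ω)]
    (W Y W₀ W₁ Y₀ Y₁ : Ω → ℝ)
    (hWmeas : Measurable W) (hYmeas : Measurable Y)
    (hW₀meas : Measurable W₀) (hW₁meas : Measurable W₁)
    (hY₀meas : Measurable Y₀) (hY₁meas : Measurable Y₁)
    (hWpos : ∀ ω, 0 < W ω) (hYpos : ∀ ω, 0 < Y ω)
    (γ c x' : ℝ) (hγ : 1 < γ) (hc : 0 < c) (hx'0 : 0 < x') (hx'1 : x' < 1)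
    (htail : ∀ x : ℝ, 0 < x → x ≤ x' →
      Real.exp (-c * (Real.log (1 / x)) ^ γ) ≤ (ℙ {ω | W ω ≤ x}).toReal)
    (hindep : iIndepFun ![W₀, W₁, Y₀, Y₁] ℙ)
    (hW₀d : IdentDistrib W₀ W ℙ ℙ) (hW₁d : IdentDistrib W₁ W ℙ ℙ)
    (hY₀d : IdentDistrib Y₀ Y ℙ ℙ) (hY₁d : IdentDistrib Y₁ Y ℙ ℙ)
    (hdom : ∀ y : ℝ, ℙ {ω | y ≤ Y ω} ≤ ℙ {ω | y ≤ W₀ ω * Y₀ ω + W₁ ω * Y₁ ω}) :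
    ∃ tγ > 0, ∃ cγ > 0, ∀ t : ℝ, tγ ≤ t →
      Real.exp (-cγ * (Real.log t) ^ γ) ≤ ∫ ω, Real.exp (-t * Y ω) := by
  classical
  set φ : ℝ → ℝ := fun t => ∫ ω, Real.exp (-t * Y ω) with hφdef
  -- basic facts about φ
  have hφint : ∀ t : ℝ, 0 ≤ t → Integrable (fun ω => Real.exp (-t * Y ω)) ℙ := by
    intro t ht
    have := exp_neg_integrable' (Z := fun ω => t * Y ω)
      (hYmeas.const_mul t) (ae_of_all _ fun ω => mul_nonneg ht (hYpos ω).le)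
    simpa [neg_mul] using this
  have hφpos : ∀ t : ℝ, 0 ≤ t → 0 < φ t := by
    intro t ht
    have := exp_neg_integral_pos' (Z := fun ω => t * Y ω)
      (hYmeas.const_mul t) (ae_of_all _ fun ω => mul_nonneg ht (hYpos ω).le)
    simpa [hφdef, neg_mul] using this
  have hφmono : ∀ t₁ t₂ : ℝ, 0 ≤ t₁ → t₁ ≤ t₂ → φ t₂ ≤ φ t₁ := by
    intro t₁ t₂ ht₁ h12
    refine integral_mono (hφint t₂ (le_trans ht₁ h12)) (hφint t₁ ht₁) fun ω => ?_
    exact Real.exp_le_exp.mpr (by nlinarith [(hYpos ω).le])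
  -- a.e. positivity transfer
  have haepos : ∀ (Z Z' : Ω → ℝ), IdentDistrib Z' Z ℙ ℙ → (∀ ω, 0 < Z ω) →
      ∀ᵐ ω ∂(ℙ : Measure Ω), 0 < Z' ω := by
    intro Z Z' hd hZpos
    have h1 : ℙ (Z' ⁻¹' Set.Iic 0) = ℙ (Z ⁻¹' Set.Iic 0) :=
      hd.measure_mem_eq measurableSet_Iic
    have h2 : Z ⁻¹' Set.Iic 0 = ∅ := by
      ext ω; simp [Set.mem_preimage, not_le.mpr (hZpos ω)]
    rw [h2, measure_empty] at h1
    rw [ae_iff]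
    convert h1 using 2
    ext ω; simp [Set.mem_preimage, not_lt]
  have hY₀pos : ∀ᵐ ω ∂(ℙ : Measure Ω), 0 < Y₀ ω := haepos Y Y₀ hY₀d hYpos
  have hY₁pos : ∀ᵐ ω ∂(ℙ : Measure Ω), 0 < Y₁ ω := haepos Y Y₁ hY₁d hYpos
  have hW₀pos : ∀ᵐ ω ∂(ℙ : Measure Ω), 0 < W₀ ω := haepos W W₀ hW₀d hWpos
  have hW₁pos : ∀ᵐ ω ∂(ℙ : Measure Ω), 0 < W₁ ω := haepos W W₁ hW₁d hWpos
  have hfmeas : ∀ i, Measurable (![W₀, W₁, Y₀, Y₁] i) := by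
    intro i; fin_cases i <;> assumption
  -- the key recursion
  have hrec : ∀ t s : ℝ, 0 < t → 0 < s → s ≤ x' →
      (Real.exp (-c * (Real.log (1/s)) ^ γ) * φ (t*s))^2 ≤ φ t := by
    intro t s ht hs hsx'
    set S : Ω → ℝ := fun ω => W₀ ω * Y₀ ω + W₁ ω * Y₁ ω with hSdef
    have hSmeas : Measurable S := (hW₀meas.mul hY₀meas).add (hW₁meas.mul hY₁meas)
    -- Step 1: domination
    have hdomI : ∫ ω, Real.exp (-t * S ω) ≤ φ t := by
      have key : ∀ u : ℝ, u ∈ Set.Ioi (0:ℝ) →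
          ℙ {ω | u < Real.exp (-t * S ω)} ≤ ℙ {ω | u < Real.exp (-t * Y ω)} := by
        intro u hu
        have hu0 : 0 < u := hu
        have hiff : ∀ Z : Ω → ℝ,
            {ω | u < Real.exp (-t * Z ω)} = {ω | Z ω < (-Real.log u)/t} := by
          intro Z; ext ω
          simp only [Set.mem_setOf_eq]
          rw [← Real.log_lt_iff_lt_exp hu0, lt_div_iff₀ ht]
          constructor <;> intro h <;> nlinarith [mul_comm t (Z ω)]
        have hcs : ∀ Z : Ω → ℝ,
            {ω | Z ω < (-Real.log u)/t} = {ω | (-Real.log u)/t ≤ Z ω}ᶜ := by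
          intro Z; ext ω; simp [not_le]
        rw [hiff S, hiff Y, hcs S, hcs Y,
          measure_compl (measurableSet_le measurable_const hSmeas) (measure_ne_top _ _),
          measure_compl (measurableSet_le measurable_const hYmeas) (measure_ne_top _ _)]
        exact tsub_le_tsub_left (hdom _) _
      have hmS : Measurable fun ω => Real.exp (-t * S ω) := (hSmeas.const_mul (-t)).exp
      have hmY : Measurable fun ω => Real.exp (-t * Y ω) := (hYmeas.const_mul (-t)).exp
      have h1 : ∫ ω, Real.exp (-t * S ω)
          = (∫⁻ ω, ENNReal.ofReal (Real.exp (-t * S ω))).toReal :=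
        integral_eq_lintegral_of_nonneg_ae (ae_of_all _ fun ω => (Real.exp_pos _).le)
          hmS.aestronglyMeasurable
      have h1' : φ t = (∫⁻ ω, ENNReal.ofReal (Real.exp (-t * Y ω))).toReal :=
        integral_eq_lintegral_of_nonneg_ae (ae_of_all _ fun ω => (Real.exp_pos _).le)
          hmY.aestronglyMeasurable
      have h2 := lintegral_eq_lintegral_meas_lt (ℙ : Measure Ω)
        (f := fun ω => Real.exp (-t * S ω)) (ae_of_all _ fun ω => (Real.exp_pos _).le)
        hmS.aemeasurable
      have h2' := lintegral_eq_lintegral_meas_lt (ℙ : Measure Ω)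
        (f := fun ω => Real.exp (-t * Y ω)) (ae_of_all _ fun ω => (Real.exp_pos _).le)
        hmY.aemeasurable
      have hfin : ∫⁻ ω, ENNReal.ofReal (Real.exp (-t * Y ω)) ∂ℙ ≠ ⊤ := by
        refine ne_top_of_le_ne_top (by simp : (1 : ENNReal) ≠ ⊤) ?_
        calc ∫⁻ ω, ENNReal.ofReal (Real.exp (-t * Y ω)) ∂ℙ
            ≤ ∫⁻ _, 1 ∂(ℙ : Measure Ω) := by
              refine lintegral_mono fun ω => ?_
              rw [ENNReal.ofReal_le_one]
              exact Real.exp_le_one_iff.mpr (by nlinarith [(hYpos ω).le])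
          _ = 1 := by simp
      rw [h1, h1']
      refine ENNReal.toReal_mono hfin ?_
      rw [h2, h2']
      refine lintegral_mono_ae ?_
      rw [ae_restrict_iff' measurableSet_Ioi]
      exact ae_of_all _ key
    -- Step 2: factorization
    have hpair : IndepFun (fun ω => (W₀ ω, Y₀ ω)) (fun ω => (W₁ ω, Y₁ ω)) ℙ :=
      hindep.indepFun_prodMk_prodMk hfmeas 0 2 1 3
        (by decide) (by decide) (by decide) (by decide)
    have hgm : Measurable fun p : ℝ × ℝ => Real.exp (-t * (p.1 * p.2)) := by fun_prop
    have hmul : IndepFun (fun ω => Real.exp (-t * (W₀ ω * Y₀ ω)))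
        (fun ω => Real.exp (-t * (W₁ ω * Y₁ ω))) ℙ := hpair.comp hgm hgm
    have hfact : ∫ ω, Real.exp (-t * S ω)
        = (∫ ω, Real.exp (-t * (W₀ ω * Y₀ ω))) * ∫ ω, Real.exp (-t * (W₁ ω * Y₁ ω)) := by
      rw [← hmul.integral_fun_mul_eq_mul_integral
        ((hW₀meas.mul hY₀meas).const_mul (-t)).exp.aestronglyMeasurable
        ((hW₁meas.mul hY₁meas).const_mul (-t)).exp.aestronglyMeasurable]
      refine integral_congr_ae (ae_of_all _ fun ω => ?_)
      show Real.exp (-t * S ω) = Real.exp (-t * (W₀ ω * Y₀ ω)) * Real.exp (-t * (W₁ ω * Y₁ ω))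
      rw [← Real.exp_add]
      congr 1
      simp only [hSdef]
      ring
    -- Step 3: single factor bound
    have hhalf : ∀ (W' Y' : Ω → ℝ), Measurable W' → Measurable Y' →
        IdentDistrib W' W ℙ ℙ → IdentDistrib Y' Y ℙ ℙ → IndepFun W' Y' ℙ →
        (∀ᵐ ω ∂(ℙ : Measure Ω), 0 < W' ω) → (∀ᵐ ω ∂(ℙ : Measure Ω), 0 < Y' ω) →
        (ℙ {ω | W ω ≤ s}).toReal * φ (t*s) ≤ ∫ ω, Real.exp (-t * (W' ω * Y' ω)) := by
      intro W' Y' hW' hY' hW'd hY'd hWY' hW'pos hY'pos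
      have hptw : ∀ᵐ ω ∂(ℙ : Measure Ω),
          (Set.Iic s).indicator (fun _ => (1:ℝ)) (W' ω) * Real.exp (-(t*s) * Y' ω)
            ≤ Real.exp (-t * (W' ω * Y' ω)) := by
        filter_upwards [hY'pos] with ω hω
        by_cases h : W' ω ∈ Set.Iic s
        · rw [Set.indicator_of_mem h, one_mul]
          refine Real.exp_le_exp.mpr ?_
          have hws : W' ω ≤ s := h
          nlinarith [mul_nonneg (mul_nonneg ht.le (sub_nonneg.mpr hws)) hω.le]
        · rw [Set.indicator_of_notMem h, zero_mul]
          exact (Real.exp_pos _).le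
      have hind_meas : Measurable fun ω => (Set.Iic s).indicator (fun _ => (1:ℝ)) (W' ω) :=
        (measurable_const.indicator measurableSet_Iic).comp hW'
      have hint1 : Integrable (fun ω =>
          (Set.Iic s).indicator (fun _ => (1:ℝ)) (W' ω) * Real.exp (-(t*s) * Y' ω)) ℙ := by
        refine (integrable_const (1:ℝ)).mono'
          (hind_meas.mul ((hY'.const_mul (-(t*s))).exp)).aestronglyMeasurable ?_
        filter_upwards [hY'pos] with ω hω
        rw [Real.norm_eq_abs, abs_mul]
        have h1 : |(Set.Iic s).indicator (fun _ => (1:ℝ)) (W' ω)| ≤ 1 := by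
          by_cases h : W' ω ∈ Set.Iic s <;>
            simp [Set.indicator_of_mem, Set.indicator_of_notMem, h]
        have h2 : |Real.exp (-(t*s) * Y' ω)| ≤ 1 := by
          rw [abs_of_pos (Real.exp_pos _)]
          exact Real.exp_le_one_iff.mpr (by nlinarith [mul_pos (mul_pos ht hs) hω])
        nlinarith [abs_nonneg ((Set.Iic s).indicator (fun _ => (1:ℝ)) (W' ω)),
          abs_nonneg (Real.exp (-(t*s) * Y' ω))]
      have hint2 : Integrable (fun ω => Real.exp (-t * (W' ω * Y' ω))) ℙ := by
        have := exp_neg_integrable' (Z := fun ω => t * (W' ω * Y' ω))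
          ((hW'.mul hY').const_mul t) ?_
        · simpa [neg_mul] using this
        · filter_upwards [hW'pos, hY'pos] with ω h1 h2
          positivity
      have hmono := integral_mono_ae hint1 hint2 hptw
      have hip : IndepFun (fun ω => (Set.Iic s).indicator (fun _ => (1:ℝ)) (W' ω))
          (fun ω => Real.exp (-(t*s) * Y' ω)) ℙ :=
        hWY'.comp (measurable_const.indicator measurableSet_Iic)
          ((measurable_id.const_mul (-(t*s))).exp)
      have heval := hip.integral_fun_mul_eq_mul_integral hind_meas.aestronglyMeasurable
        ((hY'.const_mul (-(t*s))).exp).aestronglyMeasurable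
      have hI1 : ∫ ω, (Set.Iic s).indicator (fun _ => (1:ℝ)) (W' ω)
          = (ℙ {ω | W ω ≤ s}).toReal := by
        have hA : (fun ω => (Set.Iic s).indicator (fun _ => (1:ℝ)) (W' ω))
            = (W' ⁻¹' Set.Iic s).indicator (fun _ => (1:ℝ)) := by
          funext ω
          by_cases h : W' ω ∈ Set.Iic s
          · rw [Set.indicator_of_mem h, Set.indicator_of_mem (by exact h)]
          · rw [Set.indicator_of_notMem h, Set.indicator_of_notMem (by exact h)]
        rw [hA, integral_indicator_const (1:ℝ) (hW' measurableSet_Iic), smul_eq_mul, mul_one, measureReal_def,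
          hW'd.measure_mem_eq measurableSet_Iic]
        rfl
      have hI2 : ∫ ω, Real.exp (-(t*s) * Y' ω) = φ (t*s) := by
        have hid : IdentDistrib (fun ω => Real.exp (-(t*s) * Y' ω))
            (fun ω => Real.exp (-(t*s) * Y ω)) ℙ ℙ :=
          hY'd.comp ((measurable_id.const_mul (-(t*s))).exp)
        exact hid.integral_eq
      calc (ℙ {ω | W ω ≤ s}).toReal * φ (t*s)
          = ∫ ω, (Set.Iic s).indicator (fun _ => (1:ℝ)) (W' ω) * Real.exp (-(t*s) * Y' ω) := by
            rw [heval, hI1, hI2]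
        _ ≤ _ := hmono
    -- combine
    have hPnn : (0:ℝ) ≤ (ℙ {ω | W ω ≤ s}).toReal := ENNReal.toReal_nonneg
    have hts : 0 < t * s := mul_pos ht hs
    have hφts : 0 ≤ φ (t*s) := (hφpos _ hts.le).le
    have hstep : Real.exp (-c * (Real.log (1/s)) ^ γ) * φ (t*s)
        ≤ (ℙ {ω | W ω ≤ s}).toReal * φ (t*s) :=
      mul_le_mul_of_nonneg_right (htail s hs hsx') hφts
    have hE0 : (0:ℝ) ≤ Real.exp (-c * (Real.log (1/s)) ^ γ) * φ (t*s) :=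
      mul_nonneg (Real.exp_pos _).le hφts
    have hh0 := hhalf W₀ Y₀ hW₀meas hY₀meas hW₀d hY₀d
      (hindep.indepFun (i := 0) (j := 2) (by decide)) hW₀pos hY₀pos
    have hh1 := hhalf W₁ Y₁ hW₁meas hY₁meas hW₁d hY₁d
      (hindep.indepFun (i := 1) (j := 3) (by decide)) hW₁pos hY₁pos
    calc (Real.exp (-c * (Real.log (1/s)) ^ γ) * φ (t*s))^2
        ≤ ((ℙ {ω | W ω ≤ s}).toReal * φ (t*s))^2 := by
          exact pow_le_pow_left₀ hE0 hstep 2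
      _ ≤ (∫ ω, Real.exp (-t * (W₀ ω * Y₀ ω))) * ∫ ω, Real.exp (-t * (W₁ ω * Y₁ ω)) := by
          rw [sq]
          exact mul_le_mul hh0 hh1 (mul_nonneg hPnn hφts) (le_trans (mul_nonneg hPnn hφts) hh0)
      _ = ∫ ω, Real.exp (-t * S ω) := hfact.symm
      _ ≤ φ t := hdomI
  -- arithmetic setup
  set u₀ : ℝ := max 1 (Real.log (1/x')) with hu₀def
  have hu₀1 : 1 ≤ u₀ := le_max_left _ _
  have hu₀x : Real.log (1/x') ≤ u₀ := le_max_right _ _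
  have hu₀0 : 0 < u₀ := lt_of_lt_of_le one_pos hu₀1
  set M : ℝ := -Real.log (φ (Real.exp (2*u₀))) with hMdef
  have hden : 0 < (2:ℝ)^(γ-1) - 1 := by
    have : (1:ℝ) < 2^(γ-1) := by
      rw [Real.one_lt_rpow_iff_of_pos (by norm_num)]
      left; constructor <;> [norm_num; linarith]
    linarith
  set A : ℝ := max (max 1 M) (c / ((2:ℝ)^(γ-1) - 1)) with hAdef
  have hA1 : 1 ≤ A := le_trans (le_max_left 1 M) (le_max_left _ _)
  have hAM : M ≤ A := le_trans (le_max_right 1 M) (le_max_left _ _)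
  have hAc : c ≤ A * ((2:ℝ)^(γ-1) - 1) := by
    have := le_trans (le_max_right (max 1 M) (c / ((2:ℝ)^(γ-1) - 1))) (le_refl A)
    rw [div_le_iff₀ hden] at this
    linarith
  have hA0 : 0 < A := lt_of_lt_of_le one_pos hA1
  -- the main induction
  have main : ∀ n : ℕ, ∀ u : ℝ, u₀ ≤ u → u ≤ u₀ * 2^(n+1) →
      Real.exp (-A * u^γ) ≤ φ (Real.exp u) := by
    intro n
    induction n with
    | zero =>
      intro u hu1 hu2
      have hu2' : u ≤ 2*u₀ := by
        have : u₀ * 2^(0+1) = 2*u₀ := by ring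
        linarith [this ▸ hu2]
      have h1 : φ (Real.exp (2*u₀)) ≤ φ (Real.exp u) :=
        hφmono _ _ (Real.exp_pos _).le (Real.exp_le_exp.mpr hu2')
      have h2 : φ (Real.exp (2*u₀)) = Real.exp (-M) := by
        rw [hMdef, neg_neg, Real.exp_log (hφpos _ (Real.exp_pos _).le)]
      have hu01 : 1 ≤ u := le_trans hu₀1 hu1
      have hug : 1 ≤ u^γ := Real.one_le_rpow hu01 (by linarith)
      have h3 : Real.exp (-A * u^γ) ≤ Real.exp (-M) := by
        refine Real.exp_le_exp.mpr ?_
        nlinarith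
      linarith [h2 ▸ h1]
    | succ n ih =>
      intro u hu1 hu2
      by_cases hcase : u ≤ u₀ * 2^(n+1)
      · exact ih u hu1 hcase
      push_neg at hcase
      have hp : (2:ℝ) ≤ 2^(n+1) := by
        calc (2:ℝ) = 2^1 := (pow_one 2).symm
          _ ≤ 2^(n+1) := pow_le_pow_right₀ (by norm_num) (by omega)
      have hp' : u₀ * 2 ≤ u₀ * 2^(n+1) := mul_le_mul_of_nonneg_left hp hu₀0.le
      have hu1' : u₀ ≤ u/2 := by linarith
      have hu2' : u/2 ≤ u₀ * 2^(n+1) := by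
        have h1 : (2:ℝ)^(n+1+1) = 2^(n+1) * 2 := by ring
        rw [h1] at hu2
        have h2 : u₀ * (2^(n+1) * 2) = (u₀ * 2^(n+1)) * 2 := by ring
        linarith
      have hupos : 0 < u := lt_of_lt_of_le hu₀0 hu1
      set s : ℝ := Real.exp (-(u/2)) with hsdef
      have hs0 : 0 < s := Real.exp_pos _
      have hsx : s ≤ x' := by
        have h1 : s ≤ Real.exp (-Real.log (1/x')) :=
          Real.exp_le_exp.mpr (by linarith)
        have h2 : Real.exp (-Real.log (1/x')) = x' := by
          rw [one_div, Real.log_inv, neg_neg, Real.exp_log hx'0]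
        linarith
      have hrec' := hrec (Real.exp u) s (Real.exp_pos u) hs0 hsx
      have hlog : Real.log (1/s) = u/2 := by
        rw [hsdef, one_div, ← Real.exp_neg, neg_neg, Real.log_exp]
      have hts : Real.exp u * s = Real.exp (u/2) := by
        rw [hsdef, ← Real.exp_add]; ring_nf
      rw [hlog, hts] at hrec'
      have hih := ih (u/2) hu1' hu2'
      have hφnn : 0 ≤ φ (Real.exp (u/2)) := (hφpos _ (Real.exp_pos _).le).le
      have hchain : (Real.exp (-c*(u/2)^γ) * Real.exp (-A*(u/2)^γ))^2
          ≤ (Real.exp (-c*(u/2)^γ) * φ (Real.exp (u/2)))^2 := by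
        refine pow_le_pow_left₀ (mul_nonneg (Real.exp_pos _).le (Real.exp_pos _).le) ?_ 2
        exact mul_le_mul_of_nonneg_left hih (Real.exp_pos _).le
      have harith : Real.exp (-A * u^γ)
          ≤ (Real.exp (-c*(u/2)^γ) * Real.exp (-A*(u/2)^γ))^2 := by
        rw [← Real.exp_add, sq, ← Real.exp_add]
        refine Real.exp_le_exp.mpr ?_
        have hD : 0 < (2:ℝ)^(γ-1) := Real.rpow_pos_of_pos (by norm_num) _
        have hadd : (1:ℝ) + (γ-1) = γ := by ring
        have h2γ : (2:ℝ)^γ = 2^(1:ℝ) * 2^(γ-1) := by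
          rw [← Real.rpow_add (by norm_num : (0:ℝ) < 2), hadd]
        have hhalfpow : (u/2)^γ = u^γ / (2 * 2^(γ-1)) := by
          rw [Real.div_rpow hupos.le (by norm_num : (0:ℝ) ≤ 2), h2γ, Real.rpow_one]
        have hug0 : 0 ≤ u^γ := Real.rpow_nonneg hupos.le γ
        have h1 : c + A ≤ A * 2^(γ-1) := by linarith [hAc]
        rw [hhalfpow]
        set X : ℝ := u^γ / (2 * 2^(γ-1)) with hXdef
        have hX : 0 ≤ X := by rw [hXdef]; positivity
        have hcollapse : u^γ = 2 * 2^(γ-1) * X := by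
          rw [hXdef]
          field_simp
        have hXle : (c+A) * X ≤ A * 2^(γ-1) * X := mul_le_mul_of_nonneg_right h1 hX
        rw [hcollapse]
        nlinarith [hXle]
      calc Real.exp (-A * u^γ)
          ≤ (Real.exp (-c*(u/2)^γ) * Real.exp (-A*(u/2)^γ))^2 := harith
        _ ≤ (Real.exp (-c*(u/2)^γ) * φ (Real.exp (u/2)))^2 := hchain
        _ ≤ φ (Real.exp u) := hrec'
  -- conclusion
  refine ⟨Real.exp u₀, Real.exp_pos _, A, hA0, ?_⟩
  intro t ht
  have ht0 : 0 < t := lt_of_lt_of_le (Real.exp_pos u₀) ht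
  have hu : u₀ ≤ Real.log t := by
    rw [← Real.log_exp u₀]
    exact Real.log_le_log (Real.exp_pos _) ht
  obtain ⟨n, hn⟩ := pow_unbounded_of_one_lt (Real.log t / u₀) (one_lt_two (α := ℝ))
  have hn' : Real.log t ≤ u₀ * 2^(n+1) := by
    rw [div_lt_iff₀ hu₀0] at hn
    have h1 : (2:ℝ)^n ≤ 2^(n+1) := pow_le_pow_right₀ (by norm_num) (by omega)
    have h2 : u₀ * 2^n ≤ u₀ * 2^(n+1) := mul_le_mul_of_nonneg_left h1 hu₀0.le
    have h3 : (2:ℝ)^n * u₀ = u₀ * 2^n := by ring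
    linarith
  have := main n (Real.log t) hu hn'
  rwa [Real.exp_log ht0] at this
end

section
/- Let W be a positive random variable with Laplace-type quantities φ(t) = E[e^{-tY}] for a positive random variable Y, and set ψ(t) = E[φ(tW)²], with W independent of Y. Suppose there exist c, c_α > 0, γ > α ≥ 1 and t_α > 0 such that P(W ≤ x) ≤ exp(-c(log 1/x)^γ) for small x and φ(t) ≤ exp(-c_α (log t)^α) for t ≥ t_α. Then there exist C_α > 0 and t̃_α > 0 such that ψ(t) ≤ exp(-C_α (log t)^α) for all t ≥ t̃_α. -/
set_option maxHeartbeats 1000000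


open MeasureTheory ProbabilityTheory Real
open scoped ProbabilityTheory

theorem psi_decay_from_phi_decay
    {Ω : Type*} [MeasureSpace Ω] [IsProbabilityMeasure (ℙ : Measure Ω)]
    (W Y : Ω → ℝ)
    (hWmeas : Measurable W) (hYmeas : Measurable Y)
    (hWpos : ∀ ω, 0 < W ω) (hYpos : ∀ ω, 0 < Y ω)
    (hWYindep : IndepFun W Y ℙ)
    (c cα γ α tα x' : ℝ) (hc : 0 < c) (hcα : 0 < cα) (hα : 1 ≤ α) (hαγ : α < γ)
    (htα : 0 < tα) (hx'0 : 0 < x') (hx'1 : x' < 1)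
    (htail : ∀ x : ℝ, 0 < x → x ≤ x' →
      (ℙ {ω | W ω ≤ x}).toReal ≤ Real.exp (-c * (Real.log (1 / x)) ^ γ))
    (hφ : ∀ t : ℝ, tα ≤ t →
      ∫ ω, Real.exp (-t * Y ω) ≤ Real.exp (-cα * (Real.log t) ^ α)) :
    ∃ Cα > 0, ∃ t₂ > 0, ∀ t : ℝ, t₂ ≤ t →
      ∫ ω, (∫ ω', Real.exp (-(t * W ω) * Y ω')) ^ 2
        ≤ Real.exp (-Cα * (Real.log t) ^ α) := by
  have hαpos : (0:ℝ) < α := lt_of_lt_of_le one_pos hα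
  set φfn : ℝ → ℝ := fun r => ∫ ω', Real.exp (-r * Y ω') with hφfn
  -- basic facts about φfn
  have hint : ∀ r : ℝ, 0 ≤ r → Integrable (fun ω => Real.exp (-r * Y ω)) ℙ := by
    intro r hr
    apply Integrable.mono' (integrable_const (1:ℝ))
    · exact ((hYmeas.const_mul (-r)).exp).aestronglyMeasurable
    · filter_upwards with ω
      rw [Real.norm_eq_abs, abs_of_pos (Real.exp_pos _)]
      apply Real.exp_le_one_iff.mpr
      have := (hYpos ω).le
      nlinarith [hYpos ω]
  have hφnonneg : ∀ r : ℝ, 0 ≤ φfn r := fun r =>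
    integral_nonneg fun ω => (Real.exp_pos _).le
  have hφle1 : ∀ r : ℝ, 0 ≤ r → φfn r ≤ 1 := by
    intro r hr
    calc φfn r ≤ ∫ _ω, (1:ℝ) := by
          apply integral_mono (hint r hr) (integrable_const _)
          intro ω
          apply Real.exp_le_one_iff.mpr
          nlinarith [hYpos ω]
      _ = 1 := by simp
  have hφmono : ∀ r₁ r₂ : ℝ, 0 ≤ r₁ → r₁ ≤ r₂ → φfn r₂ ≤ φfn r₁ := by
    intro r₁ r₂ h0 h12
    apply integral_mono (hint r₂ (h0.trans h12)) (hint r₁ h0)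
    intro ω
    apply Real.exp_le_exp.mpr
    nlinarith [hYpos ω]
  -- the constant
  set Cα : ℝ := cα / (2:ℝ) ^ α with hCα
  have h2α : (0:ℝ) < (2:ℝ) ^ α := Real.rpow_pos_of_pos two_pos α
  have hCαpos : 0 < Cα := div_pos hcα h2α
  refine ⟨Cα, hCαpos, ?_⟩
  -- eventual conditions
  have hev : ∀ᶠ t : ℝ in Filter.atTop,
      (0 < t ∧ tα ≤ Real.sqrt t ∧ 1 / x' ≤ Real.sqrt t ∧ 1 ≤ Real.log t
        ∧ Real.log 2 ≤ Cα * (Real.log t) ^ α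
        ∧ Cα + Real.log 2 ≤ (c / (2:ℝ) ^ γ) * (Real.log t) ^ (γ - α)) := by
    have h1 : ∀ᶠ t : ℝ in Filter.atTop, 0 < t := Filter.eventually_gt_atTop 0
    have hsq : ∀ r : ℝ, ∀ᶠ t : ℝ in Filter.atTop, r ≤ Real.sqrt t := fun r =>
      (Filter.eventually_ge_atTop (r ^ 2)).mono fun t ht => Real.le_sqrt_of_sq_le ht
    have h2 : ∀ᶠ t : ℝ in Filter.atTop, tα ≤ Real.sqrt t := hsq tα
    have h3 : ∀ᶠ t : ℝ in Filter.atTop, 1 / x' ≤ Real.sqrt t := hsq (1 / x')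
    have h4 : ∀ᶠ t : ℝ in Filter.atTop, 1 ≤ Real.log t :=
      Real.tendsto_log_atTop.eventually_ge_atTop 1
    have h5 : ∀ᶠ t : ℝ in Filter.atTop, Real.log 2 ≤ Cα * (Real.log t) ^ α := by
      have : Filter.Tendsto (fun t : ℝ => Cα * (Real.log t) ^ α)
          Filter.atTop Filter.atTop :=
        (Filter.Tendsto.const_mul_atTop hCαpos
          ((tendsto_rpow_atTop hαpos).comp Real.tendsto_log_atTop))
      exact this.eventually_ge_atTop _
    have h6 : ∀ᶠ t : ℝ in Filter.atTop,
        Cα + Real.log 2 ≤ (c / (2:ℝ) ^ γ) * (Real.log t) ^ (γ - α) := by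
      have hγα : (0:ℝ) < γ - α := sub_pos.mpr hαγ
      have hc' : 0 < c / (2:ℝ) ^ γ := div_pos hc (Real.rpow_pos_of_pos two_pos γ)
      have : Filter.Tendsto (fun t : ℝ => (c / (2:ℝ) ^ γ) * (Real.log t) ^ (γ - α))
          Filter.atTop Filter.atTop :=
        (Filter.Tendsto.const_mul_atTop hc'
          ((tendsto_rpow_atTop hγα).comp Real.tendsto_log_atTop))
      exact this.eventually_ge_atTop _
    filter_upwards [h1, h2, h3, h4, h5, h6] with t c1 c2 c3 c4 c5 c6
    exact ⟨c1, c2, c3, c4, c5, c6⟩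
  obtain ⟨t₀, ht₀⟩ := Filter.eventually_atTop.mp hev
  refine ⟨max t₀ 1, lt_of_lt_of_le one_pos (le_max_right _ _), ?_⟩
  intro t ht
  obtain ⟨htpos, htαs, hx's, hL1, hE, hF⟩ := ht₀ t ((le_max_left _ _).trans ht)
  set s := Real.sqrt t with hs
  set L := Real.log t with hL
  have hspos : 0 < s := Real.sqrt_pos.mpr htpos
  have hlogs : Real.log s = L / 2 := Real.log_sqrt htpos.le
  have hss : s * s = t := Real.mul_self_sqrt htpos.le
  have hL0 : (0:ℝ) ≤ L := by linarith
  -- the split set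
  set A : Set Ω := {ω | W ω ≤ 1 / s} with hA
  have hAmeas : MeasurableSet A := measurableSet_le hWmeas measurable_const
  -- pointwise bound
  have hpt : ∀ ω, (φfn (t * W ω)) ^ 2
      ≤ A.indicator (fun _ => (1:ℝ)) ω + (φfn s) ^ 2 := by
    intro ω
    by_cases hω : ω ∈ A
    · rw [Set.indicator_of_mem hω]
      have h1 : φfn (t * W ω) ≤ 1 :=
        hφle1 _ (le_of_lt (mul_pos htpos (hWpos ω)))
      have h0 : 0 ≤ φfn (t * W ω) := hφnonneg _
      nlinarith [sq_nonneg (φfn s)]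
    · rw [Set.indicator_of_notMem hω]
      have hgt : 1 / s < W ω := by
        simp only [hA, Set.mem_setOf_eq, not_le] at hω
        exact hω
      have hsle : s ≤ t * W ω := by
        have h1 : t / s = s := by
          field_simp
          linarith [hss]
        have h2 : 1 < W ω * s := (div_lt_iff₀ hspos).mp hgt
        nlinarith [hss, hspos, mul_lt_mul_of_pos_left h2 hspos]
      have := hφmono s (t * W ω) hspos.le hsle
      have h0 := hφnonneg (t * W ω)
      nlinarith [hφnonneg s]
  -- integral comparison
  have hgint : Integrable (fun ω => A.indicator (fun _ => (1:ℝ)) ω + (φfn s) ^ 2) ℙ :=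
    ((integrable_const (1:ℝ)).indicator hAmeas).add (integrable_const _)
  have hmain : ∫ ω, (φfn (t * W ω)) ^ 2
      ≤ (ℙ A).toReal + (φfn s) ^ 2 := by
    calc ∫ ω, (φfn (t * W ω)) ^ 2
        ≤ ∫ ω, (A.indicator (fun _ => (1:ℝ)) ω + (φfn s) ^ 2) := by
          apply integral_mono_of_nonneg
          · filter_upwards with ω; exact sq_nonneg _
          · exact hgint
          · filter_upwards with ω; exact hpt ω
      _ = (ℙ A).toReal + (φfn s) ^ 2 := by
          rw [integral_add ((integrable_const (1:ℝ)).indicator hAmeas) (integrable_const _),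
            integral_indicator_const _ hAmeas, integral_const]
          simp
          rfl
  -- bound P(A)
  have hPA : (ℙ A).toReal ≤ Real.exp (-c * (L / 2) ^ γ) := by
    have h1s : 0 < 1 / s := by positivity
    have h1sx' : 1 / s ≤ x' := by
      rw [div_le_iff₀ hspos]
      rw [div_le_iff₀ hx'0] at hx's
      linarith [hx's]
    have := htail (1 / s) h1s h1sx'
    rwa [one_div_one_div, hlogs] at this
  -- bound φ(s)²
  have hφs : (φfn s) ^ 2 ≤ Real.exp (-(2 * (Cα * L ^ α))) := by
    have h1 := hφ s (htαs)
    have h2 : (φfn s) ^ 2 ≤ (Real.exp (-cα * (Real.log s) ^ α)) ^ 2 :=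
      pow_le_pow_left₀ (hφnonneg s) h1 2
    have h3 : (Real.exp (-cα * (Real.log s) ^ α)) ^ 2
        = Real.exp (-(2 * (Cα * L ^ α))) := by
      rw [sq, ← Real.exp_add, hlogs]
      congr 1
      rw [Real.div_rpow hL0 (by norm_num : (0:ℝ) ≤ 2)]
      field_simp [hCα]
      rw [hCα]; field_simp
      norm_num
    linarith [h3 ▸ h2]
  -- final arithmetic
  have hexphalf : Real.exp (-(Cα * L ^ α)) ≤ 1 / 2 := by
    have h := Real.exp_le_exp.mpr (neg_le_neg hE)
    rw [Real.exp_neg (Real.log 2), Real.exp_log (by norm_num : (0:ℝ) < 2)] at h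
    linarith
  have hterm2 : Real.exp (-(2 * (Cα * L ^ α)))
      ≤ Real.exp (-(Cα * L ^ α)) * (1 / 2) := by
    have : Real.exp (-(2 * (Cα * L ^ α)))
        = Real.exp (-(Cα * L ^ α)) * Real.exp (-(Cα * L ^ α)) := by
      rw [← Real.exp_add]; ring_nf
    rw [this]
    exact mul_le_mul_of_nonneg_left hexphalf (Real.exp_pos _).le
  have hterm1 : Real.exp (-c * (L / 2) ^ γ)
      ≤ Real.exp (-(Cα * L ^ α)) * (1 / 2) := by
    have hkey : Cα * L ^ α + Real.log 2 ≤ c * (L / 2) ^ γ := by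
      have hdiv : c * (L / 2) ^ γ = (c / (2:ℝ) ^ γ) * L ^ γ := by
        rw [Real.div_rpow hL0 (by norm_num : (0:ℝ) ≤ 2)]
        ring
      have hsplit : L ^ γ = L ^ α * L ^ (γ - α) := by
        rw [← Real.rpow_add (by linarith : (0:ℝ) < L)]
        ring_nf
      have hLα1 : (1:ℝ) ≤ L ^ α := Real.one_le_rpow hL1 hαpos.le
      have h6 : L ^ α * (Cα + Real.log 2) ≤ L ^ α * ((c / (2:ℝ) ^ γ) * L ^ (γ - α)) :=
        mul_le_mul_of_nonneg_left hF (by positivity)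
      have hlog2 : (0:ℝ) < Real.log 2 := Real.log_pos (by norm_num)
      calc Cα * L ^ α + Real.log 2 ≤ L ^ α * (Cα + Real.log 2) := by
            nlinarith
        _ ≤ L ^ α * ((c / (2:ℝ) ^ γ) * L ^ (γ - α)) := h6
        _ = c * (L / 2) ^ γ := by rw [hdiv, hsplit]; ring
    have : Real.exp (-c * (L / 2) ^ γ) ≤ Real.exp (-(Cα * L ^ α) + -Real.log 2) := by
      apply Real.exp_le_exp.mpr
      linarith
    rw [Real.exp_add, Real.exp_neg (Real.log 2), Real.exp_log (by norm_num : (0:ℝ) < 2)] at this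
    linarith
  calc ∫ ω, (φfn (t * W ω)) ^ 2 ≤ (ℙ A).toReal + (φfn s) ^ 2 := hmain
    _ ≤ Real.exp (-c * (L / 2) ^ γ) + Real.exp (-(2 * (Cα * L ^ α))) :=
        add_le_add hPA hφs
    _ ≤ Real.exp (-(Cα * L ^ α)) * (1 / 2) + Real.exp (-(Cα * L ^ α)) * (1 / 2) :=
        add_le_add hterm1 hterm2
    _ = Real.exp (-(Cα * L ^ α)) := by ring
    _ = Real.exp (-Cα * L ^ α) := by ring_nf
end

section
/- Suppose W and Y are positive random variables with Y stochastically dominating W₀Y₀ + W₁Y₁ ((Y₀,Y₁) independent copies of Y, independent of (W₀,W₁), W₀ ≅ W₁ ≅ W), and there exist γ > 1, c > 0, x' ∈ (0,1) with P(W ≤ x) ≤ exp(-c(log 1/x)^γ) for all 0 < x ≤ x'. Assume also E[W^{-q}] < ∞ for all q > 0. Then for every α ∈ [1, γ) there exist c_α, t_α > 0 such that E[e^{-tY}] ≤ exp(-c_α (log t)^α) for all t ≥ t_α. -/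
open MeasureTheory ProbabilityTheory Real
open scoped ProbabilityTheory

set_option maxHeartbeats 1000000
set_option linter.unusedVariables false
set_option linter.unusedSectionVars false

section Analytic
open Real


lemma pow_rpow_comm' {x : ℝ} (hx : 0 ≤ x) (γ : ℝ) (k : ℕ) :
    ((x ^ k : ℝ)) ^ γ = (x ^ γ) ^ k := by
  rw [← Real.rpow_natCast x k, ← Real.rpow_natCast (x ^ γ) k, ← Real.rpow_mul hx,
    ← Real.rpow_mul hx, mul_comm]

-- small q chooser
lemma q_small (q : ℝ → ℝ) (c' γ x' : ℝ) (hγ : 1 < γ) (hc' : 0 < c')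
    (hx'0 : 0 < x') (hq1 : ∀ δ, q δ ≤ 1)
    (hqtail : ∀ δ, 0 < δ → δ ≤ x' → q δ ≤ Real.exp (-c' * (Real.log (1/δ))^γ)) :
    ∀ ε : ℝ, 0 < ε → ∃ δ, 0 < δ ∧ δ ≤ x' ∧ q δ ≤ ε := by
  intro ε hε
  rcases le_or_gt 1 ε with h1 | h1
  · refine ⟨x', hx'0, le_rfl, (hq1 x').trans h1⟩
  · set R : ℝ := max 1 (max (Real.log (1/x')) (Real.log (1/ε) / c')) with hR
    have hR1 : 1 ≤ R := le_max_left _ _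
    have hRx : Real.log (1/x') ≤ R := le_trans (le_max_left _ _) (le_max_right _ _)
    have hRε : Real.log (1/ε) / c' ≤ R := le_trans (le_max_right _ _) (le_max_right _ _)
    refine ⟨Real.exp (-R), Real.exp_pos _, ?_, ?_⟩
    · calc Real.exp (-R) ≤ Real.exp (-(Real.log (1/x'))) := by
            exact Real.exp_le_exp.2 (by linarith)
        _ = x' := by
            rw [Real.exp_neg, Real.exp_log (by positivity)]
            field_simp
    · have hlog : Real.log (1 / Real.exp (-R)) = R := by
        rw [one_div, ← Real.exp_neg, Real.log_exp, neg_neg]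
      have hRγ : R ≤ R ^ γ := by
        calc R = R ^ (1:ℝ) := (Real.rpow_one R).symm
          _ ≤ R ^ γ := Real.rpow_le_rpow_of_exponent_le hR1 (le_of_lt hγ)
      have := hqtail (Real.exp (-R)) (Real.exp_pos _) ?_
      · rw [hlog] at this
        refine this.trans ?_
        have h2 : Real.log (1/ε) ≤ c' * R := by
          rw [div_le_iff₀ hc'] at hRε; linarith [hRε]
        have h3 : -c' * R ^ γ ≤ -Real.log (1/ε) := by nlinarith
        calc Real.exp (-c' * R ^ γ) ≤ Real.exp (-Real.log (1/ε)) := Real.exp_le_exp.2 h3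
          _ = ε := by rw [Real.exp_neg, Real.exp_log (by positivity)]; field_simp
      · calc Real.exp (-R) ≤ Real.exp (-(Real.log (1/x'))) := Real.exp_le_exp.2 (by linarith)
          _ = x' := by rw [Real.exp_neg, Real.exp_log (by positivity)]; field_simp

lemma step0 (ψ q : ℝ → ℝ) (c' γ x' : ℝ) (hγ : 1 < γ) (hc' : 0 < c')
    (hx'0 : 0 < x')
    (hψ0 : ∀ t, 0 ≤ ψ t) (hψ1 : ∀ t, ψ t ≤ 1)
    (hanti : ∀ s t : ℝ, 0 ≤ s → s ≤ t → ψ t ≤ ψ s)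
    (hψlt1 : ψ 1 < 1)
    (hq0 : ∀ δ, 0 ≤ q δ) (hq1 : ∀ δ, q δ ≤ 1)
    (hqtail : ∀ δ, 0 < δ → δ ≤ x' → q δ ≤ Real.exp (-c' * (Real.log (1/δ))^γ))
    (key : ∀ t δ, 0 < t → 0 < δ → ψ t ≤ (q δ + ψ (t*δ))^2) :
    ∀ ε : ℝ, 0 < ε → ∃ T : ℝ, 1 ≤ T ∧ ∀ t, T ≤ t → ψ t ≤ ε := by
  intro ε hε
  set L : ℝ := sInf (ψ '' Set.Ioi (0:ℝ)) with hLdef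
  have hne : (ψ '' Set.Ioi (0:ℝ)).Nonempty := ⟨ψ 1, ⟨1, by norm_num, rfl⟩⟩
  have hbdd : BddBelow (ψ '' Set.Ioi (0:ℝ)) := ⟨0, fun x ⟨t, _, ht⟩ => ht ▸ hψ0 t⟩
  have hL0 : 0 ≤ L := le_csInf hne (fun x ⟨t, _, ht⟩ => ht ▸ hψ0 t)
  have hLle : ∀ t : ℝ, 0 < t → L ≤ ψ t := fun t ht => csInf_le hbdd ⟨t, ht, rfl⟩
  have hLm : L ≤ ψ 1 := hLle 1 one_pos
  -- recursion at the infimum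
  have hrec : ∀ δ : ℝ, 0 < δ → L ≤ (q δ + L)^2 := by
    intro δ hδ
    have haux : ∀ ε' : ℝ, 0 < ε' → L ≤ (q δ + L + ε')^2 := by
      intro ε' hε'
      obtain ⟨x, ⟨s, hs, rfl⟩, hxs⟩ := exists_lt_of_csInf_lt hne (lt_add_of_pos_right L hε')
      have hsδ : 0 < s / δ := div_pos hs hδ
      have h1 : ψ (s/δ) ≤ (q δ + ψ ((s/δ)*δ))^2 := key _ _ hsδ hδ
      have h2 : (s/δ)*δ = s := by field_simp
      rw [h2] at h1
      calc L ≤ ψ (s/δ) := hLle _ hsδ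
        _ ≤ (q δ + ψ s)^2 := h1
        _ ≤ (q δ + L + ε')^2 := by
            have := hq0 δ; have := hψ0 s; nlinarith [hxs.le]
    by_contra hcon
    push_neg at hcon
    set d := L - (q δ + L)^2 with hd
    have hd0 : 0 < d := by simp only [hd]; linarith
    have hC : 0 < 2*(q δ + L) + 1 := by have := hq0 δ; linarith
    have := haux (min 1 (d / (2*(2*(q δ + L) + 1)))) (by positivity)
    set e := min 1 (d / (2*(2*(q δ + L) + 1))) with he
    have he1 : e ≤ 1 := min_le_left _ _
    have he2 : e ≤ d / (2*(2*(q δ + L) + 1)) := min_le_right _ _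
    have he0 : 0 < e := by positivity
    have : L ≤ (q δ + L)^2 + e * (2*(q δ + L) + 1) := by nlinarith
    have hed : e * (2*(q δ + L) + 1) ≤ d/2 := by
      rw [le_div_iff₀ (by linarith : (0:ℝ) < 2*(2*(q δ + L) + 1))] at he2
      linarith
    linarith
  -- choose δ making q δ small, conclude L small
  set m := ψ 1 with hm
  have hm1 : m < 1 := hψlt1
  have hm0 : 0 ≤ m := hψ0 1
  set ε₁ : ℝ := min ((1-m)/2) (ε * (1-m)/8) with hε₁
  have hε₁0 : 0 < ε₁ := by
    apply lt_min <;> nlinarith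
  obtain ⟨δ, hδ0, hδx, hqδ⟩ := q_small q c' γ x' hγ hc' hx'0 hq1 hqtail ε₁ hε₁0
  have hLrec := hrec δ hδ0
  have hq0δ := hq0 δ
  -- L ≤ (qδ+L)^2 ≤ (qδ+m)(qδ+L) ⇒ L small
  have hLε : L < ε := by
    have h1 : ε₁ ≤ (1-m)/2 := min_le_left _ _
    have h2 : ε₁ ≤ ε * (1-m)/8 := min_le_right _ _
    nlinarith [sq_nonneg (q δ + L), sq_nonneg (q δ)]
  obtain ⟨x, ⟨s, hs, rfl⟩, hxs⟩ := exists_lt_of_csInf_lt hne hLε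
  refine ⟨max s 1, le_max_right _ _, fun t ht => ?_⟩
  have : ψ t ≤ ψ s := hanti s t hs.le (le_trans (le_max_left _ _) ht)
  linarith

lemma analytic_main (ψ q : ℝ → ℝ) (c' γ x' : ℝ) (hγ : 1 < γ) (hc' : 0 < c')
    (hx'0 : 0 < x') (hx'1 : x' < 1)
    (hψ0 : ∀ t, 0 ≤ ψ t) (hψ1 : ∀ t, ψ t ≤ 1)
    (hanti : ∀ s t : ℝ, 0 ≤ s → s ≤ t → ψ t ≤ ψ s)
    (hψlt1 : ψ 1 < 1)
    (hq0 : ∀ δ, 0 ≤ q δ) (hq1 : ∀ δ, q δ ≤ 1)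
    (hqtail : ∀ δ, 0 < δ → δ ≤ x' → q δ ≤ Real.exp (-c' * (Real.log (1/δ))^γ))
    (key : ∀ t δ, 0 < t → 0 < δ → ψ t ≤ (q δ + ψ (t*δ))^2) :
    ∀ α : ℝ, 1 ≤ α → α < γ →
      ∃ cα > 0, ∃ tα > 0, ∀ t : ℝ, tα ≤ t → ψ t ≤ Real.exp (-cα * (Real.log t)^α) := by
  intro α hα1 hαγ
  have hα0 : 0 < α := by linarith
  have hγ0 : 0 < γ := by linarith
  -- choose r
  set r : ℝ := ((2:ℝ) ^ (-(1:ℝ)/α) + 1) / 2 with hrdef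
  have h2a0 : (0:ℝ) < (2:ℝ) ^ (-(1:ℝ)/α) := Real.rpow_pos_of_pos (by norm_num) _
  have hna : -(1:ℝ)/α < 0 := div_neg_of_neg_of_pos (by norm_num) hα0
  have h2a1 : (2:ℝ) ^ (-(1:ℝ)/α) < 1 :=
    Real.rpow_lt_one_of_one_lt_of_neg (by norm_num) hna
  have hr0 : 0 < r := by simp only [hrdef]; linarith
  have hr1 : r < 1 := by simp only [hrdef]; linarith
  have hrlb : (2:ℝ) ^ (-(1:ℝ)/α) < r := by simp only [hrdef]; linarith
  -- A := r^(-α), B := r^(-γ)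
  set A : ℝ := r ^ (-α) with hAdef
  set B : ℝ := r ^ (-γ) with hBdef
  have hA0 : 0 < A := Real.rpow_pos_of_pos hr0 _
  have hB0 : 0 < B := Real.rpow_pos_of_pos hr0 _
  have hA1 : 1 < A := by
    rw [hAdef]
    rw [Real.one_lt_rpow_iff_of_pos hr0]
    right; exact ⟨hr1, by linarith⟩
  have hA2 : A < 2 := by
    have h1 : ((2:ℝ) ^ (-(1:ℝ)/α)) ^ α < r ^ α := Real.rpow_lt_rpow h2a0.le hrlb hα0
    have h2 : ((2:ℝ) ^ (-(1:ℝ)/α)) ^ α = 1/2 := by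
      rw [← Real.rpow_mul (by norm_num : (0:ℝ) ≤ 2)]
      rw [show (-(1:ℝ)/α) * α = -1 by field_simp]
      rw [Real.rpow_neg_one]; norm_num
    have h3 : A = (r ^ α)⁻¹ := by rw [hAdef, Real.rpow_neg hr0.le]
    rw [h3, inv_lt_comm₀ (Real.rpow_pos_of_pos hr0 α) (by norm_num : (0:ℝ) < 2)]
    rw [h2] at h1; norm_num at h1 ⊢; linarith
  have hAB : A < B := Real.rpow_lt_rpow_of_exponent_gt hr0 hr1 (by linarith)
  set μ : ℝ := min ((A+2)/2) B with hμdef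
  have hμA : A < μ := lt_min (by linarith) hAB
  have hμ2 : μ < 2 := lt_of_le_of_lt (min_le_left _ _) (by linarith)
  have hμB : μ ≤ B := min_le_right _ _
  have hμ1 : 1 < μ := lt_trans hA1 hμA
  set K : ℝ := Real.log 4 / (2 - μ) + 1 with hKdef
  have hlog4 : 0 < Real.log 4 := Real.log_pos (by norm_num)
  have hK0 : 0 < K := by
    have : 0 ≤ Real.log 4 / (2 - μ) := div_nonneg hlog4.le (by linarith)
    simp only [hKdef]; linarith
  have hK4 : Real.log 4 ≤ K * (2 - μ) := by
    rw [hKdef]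
    rw [add_mul, div_mul_cancel₀ _ (by linarith : (2:ℝ) - μ ≠ 0)]
    linarith
  obtain ⟨T, hT1, hT⟩ := step0 ψ q c' γ x' hγ hc' hx'0 hψ0 hψ1 hanti hψlt1 hq0 hq1 hqtail key
    (Real.exp (-K)) (Real.exp_pos _)
  have hrc : 0 < 1 - r := by linarith
  have h1rγ : (0:ℝ) < (1-r)^γ := Real.rpow_pos_of_pos hrc _
  set u₀ : ℝ := max (max 1 (Real.log T)) (max (Real.log (1/x') / (1-r)) (2*K/(c'*(1-r)^γ))) with hu₀def
  have hu₀1 : 1 ≤ u₀ := le_trans (le_max_left _ _) (le_max_left _ _)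
  have hu₀0 : 0 < u₀ := by linarith
  have hu₀T : T ≤ Real.exp u₀ := by
    calc T = Real.exp (Real.log T) := (Real.exp_log (by linarith)).symm
      _ ≤ Real.exp u₀ := Real.exp_le_exp.2 (le_trans (le_max_right _ _) (le_max_left _ _))
  have hu₀x : Real.log (1/x') ≤ (1-r) * u₀ := by
    have h := le_trans (le_max_left (Real.log (1/x') / (1-r)) (2*K/(c'*(1-r)^γ))) (le_max_right (max 1 (Real.log T)) (max (Real.log (1/x') / (1-r)) (2*K/(c'*(1-r)^γ))))
    rw [div_le_iff₀ hrc] at h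
    linarith [h]
  have hu₀K : K ≤ c' * (1-r)^γ * u₀ := by
    have h : 2*K/(c'*(1-r)^γ) ≤ u₀ := le_trans (le_max_right (Real.log (1/x') / (1-r)) (2*K/(c'*(1-r)^γ))) (le_max_right (max 1 (Real.log T)) (max (Real.log (1/x') / (1-r)) (2*K/(c'*(1-r)^γ))))
    rw [div_le_iff₀ (by positivity)] at h
    have h' : u₀ * (c'*(1-r)^γ) = c' * (1-r)^γ * u₀ := by ring
    linarith [h]
  -- the induction
  have main : ∀ n : ℕ, ∀ u : ℝ, u₀ * (1/r)^n ≤ u → ψ (Real.exp u) ≤ Real.exp (-(K * μ^n)) := by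
    intro n
    induction n with
    | zero =>
      intro u hu
      simp only [pow_zero, mul_one] at hu ⊢
      exact hT _ (le_trans hu₀T (Real.exp_le_exp.2 hu))
    | succ n ih =>
      intro u hu
      have hrpow : (1:ℝ) ≤ (1/r)^(n+1) := one_le_pow₀ (by rw [le_div_iff₀ hr0]; linarith)
      have huu₀ : u₀ ≤ u := le_trans (le_mul_of_one_le_right hu₀0.le hrpow) hu
      have hu1 : 1 ≤ u := le_trans hu₀1 huu₀
      set t := Real.exp u with htdef
      set δ := Real.exp (-((1-r)*u)) with hδdef
      have ht0 : 0 < t := Real.exp_pos _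
      have hδ0 : 0 < δ := Real.exp_pos _
      have htδ : t * δ = Real.exp (r*u) := by
        rw [htdef, hδdef, ← Real.exp_add]; ring_nf
      have hru : u₀ * (1/r)^n ≤ r * u := by
        have h : u₀ * (1/r)^(n+1) ≤ u := hu
        rw [pow_succ] at h
        have := mul_le_mul_of_nonneg_left h hr0.le
        calc u₀ * (1/r)^n = r * (u₀ * ((1/r)^n * (1/r))) := by field_simp
          _ ≤ r * u := this
      have hψtδ : ψ (t*δ) ≤ Real.exp (-(K * μ^n)) := by rw [htδ]; exact ih _ hru
      have hδx : δ ≤ x' := by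
        rw [hδdef]
        calc Real.exp (-((1-r)*u)) ≤ Real.exp (-(Real.log (1/x'))) := by
              apply Real.exp_le_exp.2
              have : (1-r) * u₀ ≤ (1-r) * u := mul_le_mul_of_nonneg_left huu₀ hrc.le
              linarith
          _ = x' := by rw [Real.exp_neg, Real.exp_log (by positivity)]; field_simp
      have hlogδ : Real.log (1/δ) = (1-r)*u := by
        rw [hδdef, one_div, ← Real.exp_neg, Real.log_exp, neg_neg]
      have hqbound : q δ ≤ Real.exp (-(K * μ^n)) := by
        have h1 := hqtail δ hδ0 hδx
        rw [hlogδ] at h1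
        refine h1.trans (Real.exp_le_exp.2 ?_)
        -- need K μ^n ≤ c' ((1-r)u)^γ
        have hμn1 : μ^n ≤ μ^(n+1) := pow_le_pow_right₀ hμ1.le (by omega)
        have huγ : (u₀ * (1/r)^(n+1))^γ ≤ u^γ :=
          Real.rpow_le_rpow (by positivity) hu hγ0.le
        have hsplit : (u₀ * (1/r)^(n+1))^γ = u₀^γ * ((1/r)^γ)^(n+1) := by
          rw [Real.mul_rpow hu₀0.le (by positivity), pow_rpow_comm' (by positivity) γ (n+1)]
        have hBeq : (1/r:ℝ)^γ = B := by
          rw [hBdef, one_div, Real.inv_rpow hr0.le, ← Real.rpow_neg hr0.le]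
        have hμpow : μ^(n+1) ≤ ((1/r)^γ:ℝ)^(n+1) := by
          rw [hBeq]; exact pow_le_pow_left₀ (by linarith) hμB _
        have hu₀γ : u₀ ≤ u₀^γ := by
          calc u₀ = u₀ ^ (1:ℝ) := (Real.rpow_one _).symm
            _ ≤ u₀ ^ γ := Real.rpow_le_rpow_of_exponent_le hu₀1 hγ.le
        have hc1 : K * μ^(n+1) ≤ c' * (1-r)^γ * (u₀^γ * ((1/r)^γ)^(n+1)) := by
          have h2 : K ≤ c' * (1-r)^γ * u₀^γ := by
            refine hu₀K.trans ?_
            exact mul_le_mul_of_nonneg_left hu₀γ (by positivity)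
          calc K * μ^(n+1) ≤ (c' * (1-r)^γ * u₀^γ) * μ^(n+1) :=
                mul_le_mul_of_nonneg_right h2 (by positivity)
            _ ≤ (c' * (1-r)^γ * u₀^γ) * ((1/r)^γ:ℝ)^(n+1) :=
                mul_le_mul_of_nonneg_left hμpow (by positivity)
            _ = c' * (1-r)^γ * (u₀^γ * ((1/r)^γ)^(n+1)) := by ring
        have hmul : c' * ((1-r)*u)^γ = c' * (1-r)^γ * u^γ := by
          rw [Real.mul_rpow hrc.le (by positivity)]; ring
        have : K * μ^n ≤ c' * ((1-r)*u)^γ := by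
          rw [hmul]
          have h4 : c' * (1-r)^γ * (u₀ * (1/r)^(n+1))^γ ≤ c' * (1-r)^γ * u^γ :=
            mul_le_mul_of_nonneg_left huγ (by positivity)
          rw [hsplit] at h4
          have h5 : K * μ^n ≤ K * μ^(n+1) := mul_le_mul_of_nonneg_left hμn1 hK0.le
          calc K * μ^n ≤ K * μ^(n+1) := h5
            _ ≤ c' * (1-r)^γ * (u₀^γ * ((1/r)^γ)^(n+1)) := hc1
            _ ≤ c' * (1-r)^γ * u^γ := h4
        linarith
      have hkey := key t δ ht0 hδ0
      set E := Real.exp (-(K * μ^n)) with hEdef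
      have hE0 : 0 < E := Real.exp_pos _
      have hsum : q δ + ψ (t*δ) ≤ 2*E := by linarith
      have hsq : ψ t ≤ (2*E)^2 := by
        refine hkey.trans (pow_le_pow_left₀ ?_ hsum 2)
        have := hq0 δ; have := hψ0 (t*δ); linarith
      have h2E : (2*E)^2 = 4 * (Real.exp (-(K*μ^n) + -(K*μ^n))) := by
        rw [Real.exp_add, hEdef]; ring
      have hgoal : 4 * Real.exp (-(K*μ^n) + -(K*μ^n)) ≤ Real.exp (-(K*μ^(n+1))) := by
        have hspl : Real.exp (-(K*μ^(n+1))) =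
            Real.exp (2*(K*μ^n) - K*μ^(n+1)) * Real.exp (-(K*μ^n) + -(K*μ^n)) := by
          rw [← Real.exp_add]; ring_nf
        rw [hspl]
        have h4le : (4:ℝ) ≤ Real.exp (2*(K*μ^n) - K*μ^(n+1)) := by
          rw [show (4:ℝ) = Real.exp (Real.log 4) from (Real.exp_log (by norm_num)).symm]
          apply Real.exp_le_exp.2
          have hμn : (1:ℝ) ≤ μ^n := one_le_pow₀ hμ1.le
          have hps : μ^(n+1) = μ^n * μ := pow_succ μ n
          have hKm : K*(2-μ) ≤ K*(2-μ)*μ^n :=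
            le_mul_of_one_le_right (mul_nonneg hK0.le (by linarith)) hμn
          have heq2 : K*(2-μ)*μ^n = 2*(K*μ^n) - K*μ^(n+1) := by rw [hps]; ring
          linarith
        exact mul_le_mul_of_nonneg_right h4le (Real.exp_pos _).le
      calc ψ t ≤ (2*E)^2 := hsq
        _ = 4 * (Real.exp (-(K*μ^n) + -(K*μ^n))) := h2E
        _ ≤ Real.exp (-(K*μ^(n+1))) := hgoal
  -- conclude
  refine ⟨K * r^α / u₀^α, by positivity, Real.exp (u₀ * (1/r)), Real.exp_pos _, fun t ht => ?_⟩
  set u := Real.log t with hudef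
  have ht0 : (0:ℝ) < t := lt_of_lt_of_le (Real.exp_pos _) ht
  have hu : u₀ * (1/r) ≤ u := by
    rw [hudef, ← Real.log_exp (u₀ * (1/r))]
    exact Real.log_le_log (Real.exp_pos _) ht
  have hru1 : (1:ℝ) ≤ 1/r := by rw [le_div_iff₀ hr0]; linarith
  have huu₀ : u₀ ≤ u := le_trans (le_mul_of_one_le_right hu₀0.le hru1) hu
  have hu0 : 0 < u := lt_of_lt_of_le hu₀0 huu₀
  -- find n
  have hex : ∃ n : ℕ, u < u₀ * (1/r)^(n+1) := by
    obtain ⟨n, hn⟩ := pow_unbounded_of_one_lt (u/u₀) (one_lt_one_div hr0 hr1)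
    refine ⟨n, ?_⟩
    rw [div_lt_iff₀ hu₀0] at hn
    calc u < (1/r)^n * u₀ := hn
      _ ≤ u₀ * (1/r)^(n+1) := by
          rw [pow_succ]
          have h1r : (1:ℝ) ≤ 1/r := by rw [le_div_iff₀ hr0]; linarith
          have hp : (0:ℝ) < (1/r)^n := by positivity
          calc (1/r)^n * u₀ = u₀ * ((1/r)^n * 1) := by ring
            _ ≤ u₀ * ((1/r)^n * (1/r)) := by
                refine mul_le_mul_of_nonneg_left ?_ hu₀0.le
                exact mul_le_mul_of_nonneg_left h1r hp.le
  set n := Nat.find hex with hndef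
  have hnlt : u < u₀ * (1/r)^(n+1) := Nat.find_spec hex
  have hnge : u₀ * (1/r)^n ≤ u := by
    rcases Nat.eq_zero_or_pos n with h0 | hpos
    · rw [h0]; simpa using huu₀
    · have := Nat.find_min hex (Nat.sub_lt hpos Nat.one_pos)
      push_neg at this
      have heq : n - 1 + 1 = n := Nat.succ_pred_eq_of_pos hpos
      rwa [heq] at this
  have hψt := main n u hnge
  rw [hudef, Real.exp_log ht0] at hψt
  refine hψt.trans (Real.exp_le_exp.2 ?_)
  -- need cα u^α ≤ K μ^n
  have huα : u^α ≤ (u₀ * (1/r)^(n+1))^α := Real.rpow_le_rpow hu0.le hnlt.le hα0.le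
  have hsplit : (u₀ * (1/r)^(n+1))^α = u₀^α * ((1/r)^α)^(n+1) := by
    rw [Real.mul_rpow hu₀0.le (by positivity), pow_rpow_comm' (by positivity) α (n+1)]
  have hAeq : ((1/r):ℝ)^α = A := by
    rw [hAdef, one_div, Real.inv_rpow hr0.le, ← Real.rpow_neg hr0.le]
  have hrA : r^α * A = 1 := by
    rw [hAdef, ← Real.rpow_add hr0]; simp
  have hu₀α : (0:ℝ) < u₀^α := Real.rpow_pos_of_pos hu₀0 _
  have hend : K * r^α / u₀^α * u^α ≤ K * μ^n := by
    have h1 : K * r^α / u₀^α * u^α ≤ K * r^α / u₀^α * (u₀^α * A^(n+1)) := by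
      rw [hsplit, hAeq] at huα
      exact mul_le_mul_of_nonneg_left huα (by positivity)
    have h2 : K * r^α / u₀^α * (u₀^α * A^(n+1)) = K * (r^α * A) * A^n := by
      field_simp; ring
    rw [h2, hrA, mul_one] at h1
    have h3 : K * A^n ≤ K * μ^n :=
      mul_le_mul_of_nonneg_left (pow_le_pow_left₀ hA0.le hμA.le n) hK0.le
    exact le_trans h1 h3
  rw [neg_mul]
  exact neg_le_neg hend


end Analytic

section Probabilistic

variable {Ω : Type*} [MeasureSpace Ω] [IsProbabilityMeasure (ℙ : Measure Ω)]

lemma integrable_exp_negY (Y : Ω → ℝ) (hY : Measurable Y) (hYpos : ∀ ω, 0 < Y ω)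
    (a : ℝ) (ha : 0 ≤ a) : Integrable (fun ω => Real.exp (-a * Y ω)) ℙ := by
  refine Integrable.mono' (integrable_const 1) ((hY.const_mul (-a)).exp.aestronglyMeasurable) ?_
  filter_upwards with ω
  rw [Real.norm_eq_abs, abs_of_pos (Real.exp_pos _)]
  apply Real.exp_le_one_iff.2
  nlinarith [(hYpos ω)]

/-- truncated Laplace transform -/
noncomputable def psiY (Y : Ω → ℝ) : ℝ → ℝ := fun s => ∫ ω, Real.exp (-(max s 0) * Y ω)

lemma psiY_nonneg (Y : Ω → ℝ) (s : ℝ) : 0 ≤ psiY Y s :=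
  integral_nonneg fun ω => (Real.exp_pos _).le

lemma psiY_le_one (Y : Ω → ℝ) (hY : Measurable Y) (hYpos : ∀ ω, 0 < Y ω) (s : ℝ) :
    psiY Y s ≤ 1 := by
  have h1 : psiY Y s ≤ ∫ _ω, (1:ℝ) ∂(ℙ : Measure Ω) := by
    apply integral_mono (integrable_exp_negY Y hY hYpos _ (le_max_right _ _)) (integrable_const 1)
    intro ω
    apply Real.exp_le_one_iff.2
    nlinarith [hYpos ω, le_max_right s (0:ℝ)]
  simpa using h1

lemma psiY_anti (Y : Ω → ℝ) (hY : Measurable Y) (hYpos : ∀ ω, 0 < Y ω) :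
    ∀ s t : ℝ, 0 ≤ s → s ≤ t → psiY Y t ≤ psiY Y s := by
  intro s t hs hst
  apply integral_mono (integrable_exp_negY Y hY hYpos _ (le_max_right _ _))
    (integrable_exp_negY Y hY hYpos _ (le_max_right _ _))
  intro ω
  apply Real.exp_le_exp.2
  have h1 : max s 0 = s := max_eq_left hs
  have h2 : max t 0 = t := max_eq_left (hs.trans hst)
  rw [h1, h2]
  nlinarith [hYpos ω]

lemma psiY_lt_one (Y : Ω → ℝ) (hY : Measurable Y) (hYpos : ∀ ω, 0 < Y ω) :
    psiY Y 1 < 1 := by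
  have hint : Integrable (fun ω => Real.exp (-(max (1:ℝ) 0) * Y ω)) ℙ :=
    integrable_exp_negY Y hY hYpos _ (le_max_right _ _)
  have h1 : 0 < ∫ ω, (1 - Real.exp (-(max (1:ℝ) 0) * Y ω)) ∂(ℙ : Measure Ω) := by
    rw [integral_pos_iff_support_of_nonneg_ae]
    · have : Function.support (fun ω => 1 - Real.exp (-(max (1:ℝ) 0) * Y ω)) = Set.univ := by
        ext ω
        simp only [Function.mem_support, Set.mem_univ, iff_true]
        have : Real.exp (-(max (1:ℝ) 0) * Y ω) < 1 := by
          apply Real.exp_lt_one_iff.2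
          simp only [max_eq_left (by norm_num : (0:ℝ) ≤ 1)]
          nlinarith [hYpos ω]
        intro hc
        rw [sub_eq_zero] at hc
        · rw [← hc] at this; exact lt_irrefl _ this
      rw [this]
      simp
    · filter_upwards with ω
      have : Real.exp (-(max (1:ℝ) 0) * Y ω) ≤ 1 := by
        apply Real.exp_le_one_iff.2
        nlinarith [hYpos ω, le_max_right (1:ℝ) (0:ℝ)]
      simp only [Pi.zero_apply]; linarith
    · exact (integrable_const 1).sub hint
  have h2 : ∫ ω, (1 - Real.exp (-(max (1:ℝ) 0) * Y ω)) ∂(ℙ : Measure Ω)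
      = 1 - psiY Y 1 := by
    rw [integral_sub (integrable_const 1) hint]
    simp [psiY]
  rw [h2] at h1
  linarith [h1]

lemma psiY_continuous (Y : Ω → ℝ) (hY : Measurable Y) (hYpos : ∀ ω, 0 < Y ω) :
    Continuous (psiY Y) := by
  apply continuous_of_dominated (bound := fun _ => (1:ℝ))
  · intro s
    exact ((hY.const_mul (-(max s 0))).exp.aestronglyMeasurable)
  · intro s
    filter_upwards with ω
    rw [Real.norm_eq_abs, abs_of_pos (Real.exp_pos _)]
    apply Real.exp_le_one_iff.2
    nlinarith [hYpos ω, le_max_right s (0:ℝ)]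
  · exact integrable_const 1
  · filter_upwards with ω
    have : Continuous fun s : ℝ => -(max s 0) * Y ω := by continuity
    exact this.rexp

lemma ae_pos_of_identDistrib (Z Z' : Ω → ℝ) (hZ : Measurable Z) (hZ' : Measurable Z')
    (hd : IdentDistrib Z Z' ℙ ℙ) (hpos : ∀ ω, 0 < Z' ω) :
    ∀ᵐ ω ∂(ℙ : Measure Ω), 0 < Z ω := by
  have h1 : ℙ (Z ⁻¹' (Set.Iic 0)) = ℙ (Z' ⁻¹' (Set.Iic 0)) := by
    rw [← Measure.map_apply hZ measurableSet_Iic, hd.map_eq,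
      Measure.map_apply hZ' measurableSet_Iic]
  have h2 : Z' ⁻¹' (Set.Iic 0) = ∅ := by
    ext ω
    simp only [Set.mem_preimage, Set.mem_Iic, Set.mem_empty_iff_false, iff_false, not_le]
    exact hpos ω
  rw [h2, measure_empty] at h1
  rw [ae_iff]
  convert h1 using 2
  ext ω
  simp [not_lt]

lemma key_ineq
    (W Y W₀ W₁ Y₀ Y₁ : Ω → ℝ)
    (hWmeas : Measurable W) (hYmeas : Measurable Y)
    (hW₀meas : Measurable W₀) (hW₁meas : Measurable W₁)
    (hY₀meas : Measurable Y₀) (hY₁meas : Measurable Y₁)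
    (hWpos : ∀ ω, 0 < W ω) (hYpos : ∀ ω, 0 < Y ω)
    (hY₀Y₁indep : IndepFun Y₀ Y₁ ℙ)
    (hpairindep : IndepFun (fun ω => (Y₀ ω, Y₁ ω)) (fun ω => (W₀ ω, W₁ ω)) ℙ)
    (hW₀d : IdentDistrib W₀ W ℙ ℙ) (hW₁d : IdentDistrib W₁ W ℙ ℙ)
    (hY₀d : IdentDistrib Y₀ Y ℙ ℙ) (hY₁d : IdentDistrib Y₁ Y ℙ ℙ)
    (hdom : ∀ y : ℝ, ℙ {ω | y ≤ W₀ ω * Y₀ ω + W₁ ω * Y₁ ω} ≤ ℙ {ω | y ≤ Y ω})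
    (t δ : ℝ) (ht : 0 < t) (hδ : 0 < δ) :
    psiY Y t ≤ (Real.sqrt ((ℙ {ω | W ω ≤ δ}).toReal) + psiY Y (t*δ))^2 := by
  have hY₀pos := ae_pos_of_identDistrib Y₀ Y hY₀meas hYmeas hY₀d hYpos
  have hY₁pos := ae_pos_of_identDistrib Y₁ Y hY₁meas hYmeas hY₁d hYpos
  have hW₀pos := ae_pos_of_identDistrib W₀ W hW₀meas hWmeas hW₀d hWpos
  have hW₁pos := ae_pos_of_identDistrib W₁ W hW₁meas hWmeas hW₁d hWpos
  set S : Ω → ℝ := fun ω => W₀ ω * Y₀ ω + W₁ ω * Y₁ ω with hSdef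
  have hSmeas : Measurable S := (hW₀meas.mul hY₀meas).add (hW₁meas.mul hY₁meas)
  have hSpos : ∀ᵐ ω ∂(ℙ : Measure Ω), 0 < S ω := by
    filter_upwards [hY₀pos, hY₁pos, hW₀pos, hW₁pos] with ω h1 h2 h3 h4
    simp only [hSdef]
    positivity
  -- Step A : psiY Y t ≤ ∫ exp (-t * S)
  have stepA : psiY Y t ≤ ∫ ω, Real.exp (-t * S ω) ∂(ℙ : Measure Ω) := by
    have hYnn : 0 ≤ᵐ[(ℙ : Measure Ω)] fun ω => Real.exp (-t * Y ω) :=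
      ae_of_all _ fun ω => (Real.exp_pos _).le
    have hSnn : 0 ≤ᵐ[(ℙ : Measure Ω)] fun ω => Real.exp (-t * S ω) :=
      ae_of_all _ fun ω => (Real.exp_pos _).le
    have hkeyL : ∫⁻ ω, ENNReal.ofReal (Real.exp (-t * Y ω)) ∂(ℙ : Measure Ω)
        ≤ ∫⁻ ω, ENNReal.ofReal (Real.exp (-t * S ω)) ∂(ℙ : Measure Ω) := by
      rw [lintegral_eq_lintegral_meas_lt (ℙ : Measure Ω) hYnn
          ((hYmeas.const_mul (-t)).exp.aemeasurable),
        lintegral_eq_lintegral_meas_lt (ℙ : Measure Ω) hSnn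
          ((hSmeas.const_mul (-t)).exp.aemeasurable)]
      apply lintegral_mono
      intro u
      show ℙ {a | u < Real.exp (-t * Y a)} ≤ ℙ {a | u < Real.exp (-t * S a)}
      rcases le_or_gt u 0 with hu | hu
      · apply measure_mono
        intro a _
        exact lt_of_le_of_lt hu (Real.exp_pos _)
      · have hsets : ∀ Z : Ω → ℝ,
            {a | u < Real.exp (-t * Z a)} = {a | Z a < -Real.log u / t} := by
          intro Z
          ext a
          simp only [Set.mem_setOf_eq]
          rw [← Real.log_lt_iff_lt_exp hu]
          constructor
          · intro h; rw [lt_div_iff₀ ht]; linarith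
          · intro h; rw [lt_div_iff₀ ht] at h; linarith
        rw [hsets Y, hsets S]
        set y := -Real.log u / t with hydef
        have hYc : {a | Y a < y} = {a | y ≤ Y a}ᶜ := by ext a; simp [not_le]
        have hSc : {a | S a < y} = {a | y ≤ S a}ᶜ := by ext a; simp [not_le]
        rw [hYc, hSc,
          prob_compl_eq_one_sub (show MeasurableSet {a | y ≤ Y a} from hYmeas measurableSet_Ici),
          prob_compl_eq_one_sub (show MeasurableSet {a | y ≤ S a} from hSmeas measurableSet_Ici)]
        exact tsub_le_tsub_left (hdom y) 1
    have hfin : ∫⁻ ω, ENNReal.ofReal (Real.exp (-t * S ω)) ∂(ℙ : Measure Ω) ≤ 1 := by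
      calc ∫⁻ ω, ENNReal.ofReal (Real.exp (-t * S ω)) ∂(ℙ : Measure Ω)
          ≤ ∫⁻ _ω, 1 ∂(ℙ : Measure Ω) := by
            apply lintegral_mono_ae
            filter_upwards [hSpos] with ω hω
            refine ENNReal.ofReal_le_one.2 ?_
            apply Real.exp_le_one_iff.2
            nlinarith
        _ = 1 := by simp
    have e1 : psiY Y t = ∫ ω, Real.exp (-t * Y ω) ∂(ℙ : Measure Ω) := by
      unfold psiY
      rw [max_eq_left ht.le]
    rw [e1, integral_eq_lintegral_of_nonneg_ae hYnn
        ((hYmeas.const_mul (-t)).exp.aestronglyMeasurable),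
      integral_eq_lintegral_of_nonneg_ae hSnn
        ((hSmeas.const_mul (-t)).exp.aestronglyMeasurable)]
    exact ENNReal.toReal_mono (lt_of_le_of_lt hfin ENNReal.one_lt_top).ne hkeyL
  -- Step B : factorize over the independence structure
  set νP : Measure (ℝ × ℝ) := (ℙ : Measure Ω).map (fun ω => (Y₀ ω, Y₁ ω)) with hνPdef
  set νQ : Measure (ℝ × ℝ) := (ℙ : Measure Ω).map (fun ω => (W₀ ω, W₁ ω)) with hνQdef
  have hPmeas : Measurable fun ω => (Y₀ ω, Y₁ ω) := hY₀meas.prodMk hY₁meas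
  have hQmeas : Measurable fun ω => (W₀ ω, W₁ ω) := hW₀meas.prodMk hW₁meas
  haveI : IsProbabilityMeasure νP := Measure.isProbabilityMeasure_map hPmeas.aemeasurable
  haveI : IsProbabilityMeasure νQ := Measure.isProbabilityMeasure_map hQmeas.aemeasurable
  have hmapPQ : (ℙ : Measure Ω).map (fun ω => ((Y₀ ω, Y₁ ω), (W₀ ω, W₁ ω))) = νP.prod νQ :=
    (indepFun_iff_map_prod_eq_prod_map_map hPmeas.aemeasurable hQmeas.aemeasurable).mp hpairindep
  set F : (ℝ × ℝ) × (ℝ × ℝ) → ℝ := fun z => Real.exp (-t * (z.2.1 * z.1.1 + z.2.2 * z.1.2))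
    with hFdef
  have hFcont : Continuous F := by
    apply Real.continuous_exp.comp
    fun_prop
  have hpair2 : Measurable fun ω => ((Y₀ ω, Y₁ ω), (W₀ ω, W₁ ω)) := hPmeas.prodMk hQmeas
  have stepB1 : ∫ ω, Real.exp (-t * S ω) ∂(ℙ : Measure Ω) = ∫ z, F z ∂(νP.prod νQ) := by
    rw [← hmapPQ, integral_map hpair2.aemeasurable hFcont.aestronglyMeasurable]
  have hposset : MeasurableSet {z : (ℝ × ℝ) × (ℝ × ℝ) |
      (0 < z.1.1 ∧ 0 < z.1.2) ∧ (0 < z.2.1 ∧ 0 < z.2.2)} := by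
    apply MeasurableSet.inter
    · exact ((measurableSet_lt measurable_const (measurable_fst.comp measurable_fst)).inter
        (measurableSet_lt measurable_const (measurable_snd.comp measurable_fst)))
    · exact ((measurableSet_lt measurable_const (measurable_fst.comp measurable_snd)).inter
        (measurableSet_lt measurable_const (measurable_snd.comp measurable_snd)))
  have hFae : ∀ᵐ z ∂(νP.prod νQ), (0 < z.1.1 ∧ 0 < z.1.2) ∧ (0 < z.2.1 ∧ 0 < z.2.2) := by
    rw [← hmapPQ]
    rw [ae_map_iff hpair2.aemeasurable hposset]
    filter_upwards [hY₀pos, hY₁pos, hW₀pos, hW₁pos] with ω h1 h2 h3 h4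
    exact ⟨⟨h1, h2⟩, ⟨h3, h4⟩⟩
  have hFint : Integrable F (νP.prod νQ) := by
    refine Integrable.mono' (integrable_const 1) hFcont.aestronglyMeasurable ?_
    filter_upwards [hFae] with z hz
    rw [Real.norm_eq_abs, abs_of_pos (Real.exp_pos _)]
    apply Real.exp_le_one_iff.2
    obtain ⟨⟨h1, h2⟩, h3, h4⟩ := hz
    have := mul_pos ht (add_pos (mul_pos h3 h1) (mul_pos h4 h2))
    linarith
  have stepB2 : ∫ z, F z ∂(νP.prod νQ) = ∫ w, (∫ y, F (y, w) ∂νP) ∂νQ :=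
    integral_prod_symm F hFint
  have hνQae : ∀ᵐ w ∂νQ, 0 < w.1 ∧ 0 < w.2 := by
    rw [hνQdef, ae_map_iff hQmeas.aemeasurable
      (show MeasurableSet {w : ℝ × ℝ | 0 < w.1 ∧ 0 < w.2} from
        (measurableSet_lt measurable_const measurable_fst).inter
        (measurableSet_lt measurable_const measurable_snd))]
    filter_upwards [hW₀pos, hW₁pos] with ω h1 h2
    exact ⟨h1, h2⟩
  have hνP_eq : νP = ((ℙ : Measure Ω).map Y₀).prod ((ℙ : Measure Ω).map Y₁) :=
    (indepFun_iff_map_prod_eq_prod_map_map hY₀meas.aemeasurable hY₁meas.aemeasurable).mp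
      hY₀Y₁indep
  have hinner : ∀ w : ℝ × ℝ, 0 < w.1 → 0 < w.2 →
      (∫ y, F (y, w) ∂νP) = psiY Y (t * w.1) * psiY Y (t * w.2) := by
    intro w hw1 hw2
    have h2 : ∫ y, F (y, w) ∂νP
        = (∫ a, Real.exp (-(t * w.1) * a) ∂((ℙ : Measure Ω).map Y₀))
          * (∫ a, Real.exp (-(t * w.2) * a) ∂((ℙ : Measure Ω).map Y₁)) := by
      rw [hνP_eq, ← integral_prod_mul]
      apply integral_congr_ae
      filter_upwards with y
      rw [hFdef]
      simp only []
      rw [← Real.exp_add]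
      ring_nf
    have h3 : ∫ a, Real.exp (-(t * w.1) * a) ∂((ℙ : Measure Ω).map Y₀) = psiY Y (t * w.1) := by
      rw [integral_map hY₀meas.aemeasurable
        (Continuous.aestronglyMeasurable (by fun_prop))]
      have h5 := (hY₀d.comp (u := fun a => Real.exp (-(t * w.1) * a)) (by fun_prop)).integral_eq
      simp only [Function.comp] at h5
      rw [h5]
      unfold psiY
      rw [max_eq_left (by positivity : (0:ℝ) ≤ t * w.1)]
    have h4 : ∫ a, Real.exp (-(t * w.2) * a) ∂((ℙ : Measure Ω).map Y₁) = psiY Y (t * w.2) := by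
      rw [integral_map hY₁meas.aemeasurable
        (Continuous.aestronglyMeasurable (by fun_prop))]
      have h5 := (hY₁d.comp (u := fun a => Real.exp (-(t * w.2) * a)) (by fun_prop)).integral_eq
      simp only [Function.comp] at h5
      rw [h5]
      unfold psiY
      rw [max_eq_left (by positivity : (0:ℝ) ≤ t * w.2)]
    rw [h2, h3, h4]
  have stepB3 : ∫ w, (∫ y, F (y, w) ∂νP) ∂νQ
      = ∫ w : ℝ × ℝ, psiY Y (t * w.1) * psiY Y (t * w.2) ∂νQ := by
    apply integral_congr_ae
    filter_upwards [hνQae] with w hw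
    exact hinner w hw.1 hw.2
  -- Step C : bound by the indicator-type function G
  set ψδ : ℝ := psiY Y (t * δ) with hψδdef
  have hψδ0 : 0 ≤ ψδ := psiY_nonneg Y _
  have hψδ1 : ψδ ≤ 1 := psiY_le_one Y hYmeas hYpos _
  set G : ℝ → ℝ := fun x => (if x ≤ δ then (1:ℝ) else 0) + ψδ with hGdef
  have hGmeas : Measurable G := by
    apply Measurable.add _ measurable_const
    exact Measurable.ite measurableSet_Iic measurable_const measurable_const
  have hG0 : ∀ x, 0 ≤ G x := by
    intro x
    rw [hGdef]
    simp only []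
    split <;> linarith
  have hG1 : ∀ x, G x ≤ 1 + ψδ := by
    intro x
    rw [hGdef]
    simp only []
    split <;> linarith
  have hGbound : ∀ x : ℝ, 0 < x → psiY Y (t * x) ≤ G x := by
    intro x hx
    rw [hGdef]
    simp only []
    by_cases hxδ : x ≤ δ
    · rw [if_pos hxδ]
      linarith [psiY_le_one Y hYmeas hYpos (t * x)]
    · rw [if_neg hxδ]
      push_neg at hxδ
      have : psiY Y (t * x) ≤ psiY Y (t * δ) := by
        apply psiY_anti Y hYmeas hYpos _ _ (by positivity)
        exact mul_le_mul_of_nonneg_left hxδ.le ht.le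
      linarith
  have hψcont := psiY_continuous Y hYmeas hYpos
  have stepC : ∫ w : ℝ × ℝ, psiY Y (t * w.1) * psiY Y (t * w.2) ∂νQ
      ≤ ∫ w : ℝ × ℝ, G w.1 * G w.2 ∂νQ := by
    have hint1 : Integrable (fun w : ℝ × ℝ => psiY Y (t * w.1) * psiY Y (t * w.2)) νQ := by
      refine Integrable.mono' (integrable_const 1)
        (Continuous.aestronglyMeasurable (by fun_prop)) ?_
      filter_upwards with w
      rw [Real.norm_eq_abs, abs_of_nonneg (mul_nonneg (psiY_nonneg Y _) (psiY_nonneg Y _))]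
      calc psiY Y (t * w.1) * psiY Y (t * w.2) ≤ 1 * 1 := by
            apply mul_le_mul (psiY_le_one Y hYmeas hYpos _) (psiY_le_one Y hYmeas hYpos _)
              (psiY_nonneg Y _) (by norm_num)
        _ = 1 := by norm_num
    have hint2 : Integrable (fun w : ℝ × ℝ => G w.1 * G w.2) νQ := by
      refine Integrable.mono' (integrable_const ((1+ψδ)*(1+ψδ)))
        ((show Measurable fun w : ℝ × ℝ => G w.1 * G w.2 from
          (hGmeas.comp measurable_fst).mul (hGmeas.comp measurable_snd)).aestronglyMeasurable) ?_
      filter_upwards with w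
      rw [Real.norm_eq_abs, abs_of_nonneg (mul_nonneg (hG0 _) (hG0 _))]
      exact mul_le_mul (hG1 _) (hG1 _) (hG0 _) (by linarith)
    apply integral_mono_ae hint1 hint2
    filter_upwards [hνQae] with w hw
    exact mul_le_mul (hGbound _ hw.1) (hGbound _ hw.2) (psiY_nonneg Y _) (hG0 _)
  -- Step D : back to Ω
  have stepD : ∫ w : ℝ × ℝ, G w.1 * G w.2 ∂νQ = ∫ ω, G (W₀ ω) * G (W₁ ω) ∂(ℙ : Measure Ω) := by
    rw [hνQdef, integral_map hQmeas.aemeasurable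
      ((show Measurable fun w : ℝ × ℝ => G w.1 * G w.2 from
        (hGmeas.comp measurable_fst).mul (hGmeas.comp measurable_snd)).aestronglyMeasurable)]
  -- Step E : expand and estimate
  set p : ℝ := (ℙ {ω | W ω ≤ δ}).toReal with hpdef
  have hp0 : 0 ≤ p := ENNReal.toReal_nonneg
  have hp1 : p ≤ 1 := by
    rw [hpdef]
    exact ENNReal.toReal_le_of_le_ofReal (by norm_num) (by simpa using prob_le_one)
  set A₀ : Ω → ℝ := fun ω => if W₀ ω ≤ δ then (1:ℝ) else 0 with hA₀def
  set A₁ : Ω → ℝ := fun ω => if W₁ ω ≤ δ then (1:ℝ) else 0 with hA₁def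
  have hA₀meas : Measurable A₀ :=
    Measurable.ite (hW₀meas measurableSet_Iic) measurable_const measurable_const
  have hA₁meas : Measurable A₁ :=
    Measurable.ite (hW₁meas measurableSet_Iic) measurable_const measurable_const
  have hA₀01 : ∀ ω, 0 ≤ A₀ ω ∧ A₀ ω ≤ 1 := by
    intro ω; rw [hA₀def]; simp only []; split <;> norm_num
  have hA₁01 : ∀ ω, 0 ≤ A₁ ω ∧ A₁ ω ≤ 1 := by
    intro ω; rw [hA₁def]; simp only []; split <;> norm_num
  have hintA₀ : Integrable A₀ ℙ := by
    refine Integrable.mono' (integrable_const 1) hA₀meas.aestronglyMeasurable ?_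
    filter_upwards with ω
    rw [Real.norm_eq_abs, abs_of_nonneg (hA₀01 ω).1]; exact (hA₀01 ω).2
  have hintA₁ : Integrable A₁ ℙ := by
    refine Integrable.mono' (integrable_const 1) hA₁meas.aestronglyMeasurable ?_
    filter_upwards with ω
    rw [Real.norm_eq_abs, abs_of_nonneg (hA₁01 ω).1]; exact (hA₁01 ω).2
  have hintA₀A₁ : Integrable (fun ω => A₀ ω * A₁ ω) ℙ := by
    refine Integrable.mono' (integrable_const 1) (hA₀meas.mul hA₁meas).aestronglyMeasurable ?_
    filter_upwards with ω
    rw [Real.norm_eq_abs, abs_of_nonneg (mul_nonneg (hA₀01 ω).1 (hA₁01 ω).1)]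
    calc A₀ ω * A₁ ω ≤ 1 * 1 := mul_le_mul (hA₀01 ω).2 (hA₁01 ω).2 (hA₁01 ω).1 (by norm_num)
      _ = 1 := by norm_num
  have hGW : ∀ ω, G (W₀ ω) * G (W₁ ω)
      = A₀ ω * A₁ ω + ψδ * A₀ ω + ψδ * A₁ ω + ψδ^2 := by
    intro ω
    rw [hGdef, hA₀def, hA₁def]
    simp only []
    ring
  have hintW₀ : (ℙ : Measure Ω) {ω | W₀ ω ≤ δ} = ℙ {ω | W ω ≤ δ} := by
    have e0 : {ω | W₀ ω ≤ δ} = W₀ ⁻¹' (Set.Iic δ) := rfl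
    have e1 : {ω | W ω ≤ δ} = W ⁻¹' (Set.Iic δ) := rfl
    rw [e0, e1, ← Measure.map_apply hW₀meas measurableSet_Iic, hW₀d.map_eq,
      Measure.map_apply hWmeas measurableSet_Iic]
  have hintW₁ : (ℙ : Measure Ω) {ω | W₁ ω ≤ δ} = ℙ {ω | W ω ≤ δ} := by
    have e0 : {ω | W₁ ω ≤ δ} = W₁ ⁻¹' (Set.Iic δ) := rfl
    have e1 : {ω | W ω ≤ δ} = W ⁻¹' (Set.Iic δ) := rfl
    rw [e0, e1, ← Measure.map_apply hW₁meas measurableSet_Iic, hW₁d.map_eq,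
      Measure.map_apply hWmeas measurableSet_Iic]
  have hEA₀ : ∫ ω, A₀ ω ∂(ℙ : Measure Ω) = p := by
    have e2 : A₀ = Set.indicator {ω | W₀ ω ≤ δ} (fun _ => (1:ℝ)) := by
      funext ω
      simp [hA₀def, Set.indicator_apply]
    rw [e2, integral_indicator_const (1:ℝ)
      (show MeasurableSet {ω | W₀ ω ≤ δ} from hW₀meas measurableSet_Iic), measureReal_def, hintW₀, hpdef]
    simp
  have hEA₁ : ∫ ω, A₁ ω ∂(ℙ : Measure Ω) = p := by
    have e2 : A₁ = Set.indicator {ω | W₁ ω ≤ δ} (fun _ => (1:ℝ)) := by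
      funext ω
      simp [hA₁def, Set.indicator_apply]
    rw [e2, integral_indicator_const (1:ℝ)
      (show MeasurableSet {ω | W₁ ω ≤ δ} from hW₁meas measurableSet_Iic), measureReal_def, hintW₁, hpdef]
    simp
  have hEA₀A₁ : ∫ ω, A₀ ω * A₁ ω ∂(ℙ : Measure Ω) ≤ p := by
    rw [← hEA₀]
    apply integral_mono hintA₀A₁ hintA₀
    intro ω
    exact mul_le_of_le_one_right (hA₀01 ω).1 (hA₁01 ω).2
  have stepE : ∫ ω, G (W₀ ω) * G (W₁ ω) ∂(ℙ : Measure Ω) ≤ p + ψδ * p + ψδ * p + ψδ^2 := by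
    have e3 : ∫ ω, G (W₀ ω) * G (W₁ ω) ∂(ℙ : Measure Ω)
        = (∫ ω, A₀ ω * A₁ ω ∂(ℙ : Measure Ω)) + ψδ * p + ψδ * p + ψδ^2 := by
      have e4 : (fun ω => G (W₀ ω) * G (W₁ ω))
          = fun ω => A₀ ω * A₁ ω + ψδ * A₀ ω + ψδ * A₁ ω + ψδ^2 := funext hGW
      rw [e4]
      have i0 : Integrable (fun ω => ψδ * A₀ ω) ℙ := hintA₀.const_mul ψδ
      have i0' : Integrable (fun ω => ψδ * A₁ ω) ℙ := hintA₁.const_mul ψδ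
      have i1 : Integrable (fun ω => A₀ ω * A₁ ω + ψδ * A₀ ω) ℙ := hintA₀A₁.add i0
      have i2 : Integrable (fun ω => A₀ ω * A₁ ω + ψδ * A₀ ω + ψδ * A₁ ω) ℙ := i1.add i0'
      rw [integral_add i2 (integrable_const _), integral_add i1 i0', integral_add hintA₀A₁ i0,
        integral_const_mul, integral_const_mul, hEA₀, hEA₁]
      simp
    rw [e3]
    linarith
  -- assemble
  have hsq : Real.sqrt p * Real.sqrt p = p := Real.mul_self_sqrt hp0
  have hs1 : Real.sqrt p ≤ 1 := by
    rw [← Real.sqrt_one]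
    exact Real.sqrt_le_sqrt hp1
  have hs0 : 0 ≤ Real.sqrt p := Real.sqrt_nonneg p
  calc psiY Y t ≤ ∫ ω, Real.exp (-t * S ω) ∂(ℙ : Measure Ω) := stepA
    _ = ∫ z, F z ∂(νP.prod νQ) := stepB1
    _ = ∫ w, (∫ y, F (y, w) ∂νP) ∂νQ := stepB2
    _ = ∫ w : ℝ × ℝ, psiY Y (t * w.1) * psiY Y (t * w.2) ∂νQ := stepB3
    _ ≤ ∫ w : ℝ × ℝ, G w.1 * G w.2 ∂νQ := stepC
    _ = ∫ ω, G (W₀ ω) * G (W₁ ω) ∂(ℙ : Measure Ω) := stepD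
    _ ≤ p + ψδ * p + ψδ * p + ψδ^2 := stepE
    _ ≤ (Real.sqrt p + ψδ)^2 := by
        have hple : p ≤ Real.sqrt p := by nlinarith
        have h2 : ψδ * p ≤ ψδ * Real.sqrt p := mul_le_mul_of_nonneg_left hple hψδ0
        nlinarith [h2, hsq]



end Probabilistic

theorem laplace_upper_bound_main
    {Ω : Type*} [MeasureSpace Ω] [IsProbabilityMeasure (ℙ : Measure Ω)]
    (W Y W₀ W₁ Y₀ Y₁ : Ω → ℝ)
    (hWmeas : Measurable W) (hYmeas : Measurable Y)
    (hW₀meas : Measurable W₀) (hW₁meas : Measurable W₁)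
    (hY₀meas : Measurable Y₀) (hY₁meas : Measurable Y₁)
    (hWpos : ∀ ω, 0 < W ω) (hYpos : ∀ ω, 0 < Y ω)
    (hY₀Y₁indep : IndepFun Y₀ Y₁ ℙ)
    (hpairindep : IndepFun (fun ω => (Y₀ ω, Y₁ ω)) (fun ω => (W₀ ω, W₁ ω)) ℙ)
    (hW₀d : IdentDistrib W₀ W ℙ ℙ) (hW₁d : IdentDistrib W₁ W ℙ ℙ)
    (hY₀d : IdentDistrib Y₀ Y ℙ ℙ) (hY₁d : IdentDistrib Y₁ Y ℙ ℙ)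
    (hdom : ∀ y : ℝ, ℙ {ω | y ≤ W₀ ω * Y₀ ω + W₁ ω * Y₁ ω} ≤ ℙ {ω | y ≤ Y ω})
    (γ c x' : ℝ) (hγ : 1 < γ) (hc : 0 < c) (hx'0 : 0 < x') (hx'1 : x' < 1)
    (htail : ∀ x : ℝ, 0 < x → x ≤ x' →
      (ℙ {ω | W ω ≤ x}).toReal ≤ Real.exp (-c * (Real.log (1 / x)) ^ γ))
    (hmom : ∀ q : ℝ, 0 < q → Integrable (fun ω => (W ω) ^ (-q)) ℙ) :
    ∀ α : ℝ, 1 ≤ α → α < γ →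
      ∃ cα > 0, ∃ tα > 0, ∀ t : ℝ, tα ≤ t →
        ∫ ω, Real.exp (-t * Y ω) ≤ Real.exp (-cα * (Real.log t) ^ α) := by
  intro α hα1 hαγ
  set q : ℝ → ℝ := fun δ => Real.sqrt ((ℙ {ω | W ω ≤ δ}).toReal) with hqdef
  have hq0 : ∀ δ, 0 ≤ q δ := fun δ => Real.sqrt_nonneg _
  have hq1 : ∀ δ, q δ ≤ 1 := by
    intro δ
    rw [hqdef]
    simp only []
    rw [← Real.sqrt_one]
    apply Real.sqrt_le_sqrt
    exact ENNReal.toReal_le_of_le_ofReal (by norm_num) (by simpa using prob_le_one)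
  have hqtail : ∀ δ, 0 < δ → δ ≤ x' → q δ ≤ Real.exp (-(c/2) * (Real.log (1/δ))^γ) := by
    intro δ hδ hδx
    rw [hqdef]
    simp only []
    calc Real.sqrt ((ℙ {ω | W ω ≤ δ}).toReal)
        ≤ Real.sqrt (Real.exp (-c * (Real.log (1/δ))^γ)) :=
          Real.sqrt_le_sqrt (htail δ hδ hδx)
      _ = Real.exp ((-c * (Real.log (1/δ))^γ) / 2) := (Real.exp_half _).symm
      _ = Real.exp (-(c/2) * (Real.log (1/δ))^γ) := by ring_nf
  have hkey : ∀ t δ : ℝ, 0 < t → 0 < δ → psiY Y t ≤ (q δ + psiY Y (t*δ))^2 := by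
    intro t δ ht hδ
    exact key_ineq W Y W₀ W₁ Y₀ Y₁ hWmeas hYmeas hW₀meas hW₁meas hY₀meas hY₁meas hWpos hYpos
      hY₀Y₁indep hpairindep hW₀d hW₁d hY₀d hY₁d hdom t δ ht hδ
  obtain ⟨cα, hcα, tα, htα, hbound⟩ :=
    analytic_main (psiY Y) q (c/2) γ x' hγ (by linarith) hx'0 hx'1
      (psiY_nonneg Y) (psiY_le_one Y hYmeas hYpos) (psiY_anti Y hYmeas hYpos)
      (psiY_lt_one Y hYmeas hYpos) hq0 hq1 hqtail hkey α hα1 hαγ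
  refine ⟨cα, hcα, max tα 1, lt_of_lt_of_le one_pos (le_max_right _ _), fun t ht => ?_⟩
  have ht0 : (0:ℝ) < t := lt_of_lt_of_le one_pos (le_trans (le_max_right _ _) ht)
  have h1 := hbound t (le_trans (le_max_left _ _) ht)
  have h2 : psiY Y t = ∫ ω, Real.exp (-t * Y ω) := by
    unfold psiY
    rw [max_eq_left ht0.le]
  rw [h2] at h1
  exact h1
end
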